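/- arXiv:2411.07418 — 6 statements merged into one kernel-verified Lean document; each statement's English description precedes it below -/
import Mathlib

section
/- Let g ≥ 2 and let D = {d₁,…,d_t} ⊆ {0,…,g−1} with d₁ the smallest element and t ≥ 2. Let a, a' be positive integers with gcd(g, a) = 1 and set p := a'·φ(a(g−1)) and δ := gcd(a·a', d₂−d₁, …, d_t−d₁). Then there exists a finite word w with all digits in D such that p divides the length of w, the base-g value (w)_g ≡ δ (mod a), and the digit sum S_g(w) ≡ δ (mod a'). -/
/-- Any integer is congruent mod `m > 0` to a natural number, in `ZMod m`. -/
lemma exists_nat_cast_eq (m : ℕ) (hm : 0 < m) (z : ℤ) :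
    ∃ k : ℕ, ((k : ℕ) : ZMod m) = (z : ZMod m) := by
  refine ⟨(z % m).toNat, ?_⟩
  have h0 : (0 : ℤ) ≤ z % m := Int.emod_nonneg z (by exact_mod_cast hm.ne')
  have : (((z % m).toNat : ℤ) : ZMod m) = (z : ZMod m) := by
    rw [Int.toNat_of_nonneg h0, Int.emod_def]
    push_cast
    simp [ZMod.natCast_self]
  exact_mod_cast this

/-- Bézout over a finset, realized as a sum of a list of elements mod `m`. -/
lemma bezout_list (m : ℕ) (hm : 0 < m) (f : ℕ → ℕ) (s : Finset ℕ) :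
    ∀ c : ℕ, ∃ bs : List ℕ, (∀ b ∈ bs, b ∈ s) ∧
      (((bs.map f).sum : ℕ) : ZMod m) = (c : ZMod m) * ((s.gcd f : ℕ) : ZMod m) := by
  classical
  induction s using Finset.induction_on with
  | empty => intro c; exact ⟨[], by simp, by simp⟩
  | insert x t hx ih =>
    intro c
    set G := t.gcd f with hG
    have hbez := Nat.gcd_eq_gcd_ab (f x) G
    obtain ⟨kA, hkA⟩ := exists_nat_cast_eq m hm ((c : ℤ) * Nat.gcdA (f x) G)
    obtain ⟨kB, hkB⟩ := exists_nat_cast_eq m hm ((c : ℤ) * Nat.gcdB (f x) G)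
    obtain ⟨bs, hbs, hsum⟩ := ih kB
    refine ⟨List.replicate kA x ++ bs, ?_, ?_⟩
    · intro b hb
      rcases List.mem_append.1 hb with h | h
      · simp [List.eq_of_mem_replicate h]
      · exact Finset.mem_insert_of_mem (hbs b h)
    · have hgcd : (insert x t).gcd f = Nat.gcd (f x) G := Finset.gcd_insert
      rw [List.map_append, List.sum_append, hgcd, List.map_replicate,
        List.sum_replicate, smul_eq_mul]
      rw [Nat.cast_add, Nat.cast_mul, hsum]
      have : ((Nat.gcd (f x) G : ℕ) : ZMod m) =
          ((f x : ZMod m)) * (((Nat.gcdA (f x) G : ℤ) : ZMod m)) +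
          ((G : ZMod m)) * (((Nat.gcdB (f x) G : ℤ) : ZMod m)) := by
        have := congrArg (fun z : ℤ => (z : ZMod m)) hbez
        push_cast at this ⊢
        exact this
      rw [this]
      have hA : ((kA : ℕ) : ZMod m) = (c : ZMod m) * ((Nat.gcdA (f x) G : ℤ) : ZMod m) := by
        rw [hkA]; push_cast; ring
      have hB : ((kB : ℕ) : ZMod m) = (c : ZMod m) * ((Nat.gcdB (f x) G : ℤ) : ZMod m) := by
        rw [hkB]; push_cast; ring
      rw [hA, hB]
      ring

/-- Word made of blocks of length `p`: each block starts with a digit `b` from the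
list and is padded with `p - 1` copies of `d₁`. -/
def wordOf (p d₁ : ℕ) : List ℕ → List ℕ
  | [] => []
  | b :: bs => (b :: List.replicate (p - 1) d₁) ++ wordOf p d₁ bs

lemma wordOf_mem (p d₁ : ℕ) (bs : List ℕ) :
    ∀ d ∈ wordOf p d₁ bs, d = d₁ ∨ d ∈ bs := by
  induction bs with
  | nil => simp [wordOf]
  | cons b bs ih =>
    intro d hd
    rw [wordOf, List.mem_append] at hd
    rcases hd with h | h
    · rcases List.mem_cons.1 h with h | h
      · exact Or.inr (by simp [h])
      · exact Or.inl (List.eq_of_mem_replicate h)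
    · rcases ih d h with h | h
      · exact Or.inl h
      · exact Or.inr (List.mem_cons_of_mem _ h)

lemma wordOf_length (p d₁ : ℕ) (hp : 0 < p) (bs : List ℕ) :
    (wordOf p d₁ bs).length = p * bs.length := by
  induction bs with
  | nil => simp [wordOf]
  | cons b bs ih =>
    rw [wordOf, List.length_append, ih]
    simp only [List.length_cons, List.length_replicate]
    rw [Nat.sub_add_cancel hp]
    ring

lemma wordOf_sum (p d₁ : ℕ) (hp : 0 < p) (bs : List ℕ) (hbs : ∀ b ∈ bs, d₁ ≤ b) :
    (wordOf p d₁ bs).sum = (bs.map (fun b => b - d₁)).sum + p * d₁ * bs.length := by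
  induction bs with
  | nil => simp [wordOf]
  | cons b bs ih =>
    rw [wordOf, List.sum_append, ih (fun x hx => hbs x (List.mem_cons_of_mem _ hx))]
    simp only [List.sum_cons, List.sum_replicate, smul_eq_mul, List.map_cons,
      List.length_cons]
    have hb : d₁ ≤ b := hbs b List.mem_cons_self
    have h1 : (p - 1) * d₁ = p * d₁ - d₁ := by rw [Nat.sub_mul, one_mul]
    have h2 : d₁ ≤ p * d₁ := Nat.le_mul_of_pos_left _ hp
    have : b + (p - 1) * d₁ = (b - d₁) + p * d₁ := by omega
    rw [this]; ring

lemma wordOf_value (g a p d₁ : ℕ) (hp : 0 < p)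
    (hV : a ∣ Nat.ofDigits g (List.replicate p d₁))
    (hgp : g ^ p ≡ 1 [MOD a])
    (bs : List ℕ) (hbs : ∀ b ∈ bs, d₁ ≤ b) :
    Nat.ofDigits g (wordOf p d₁ bs) ≡ (bs.map (fun b => b - d₁)).sum [MOD a] := by
  induction bs with
  | nil => simp [wordOf, Nat.ModEq.refl]
  | cons b bs ih =>
    have hb : d₁ ≤ b := hbs b List.mem_cons_self
    have ih' := ih (fun x hx => hbs x (List.mem_cons_of_mem _ hx))
    have hrep : List.replicate p d₁ = d₁ :: List.replicate (p - 1) d₁ := by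
      conv_lhs => rw [show p = (p - 1) + 1 by omega]
      rw [List.replicate_succ]
    have hblock : Nat.ofDigits g (b :: List.replicate (p - 1) d₁)
        = (b - d₁) + Nat.ofDigits g (List.replicate p d₁) := by
      rw [hrep, Nat.ofDigits_cons, Nat.ofDigits_cons]
      omega
    have hlen : (b :: List.replicate (p - 1) d₁).length = p := by
      simp; omega
    rw [wordOf, Nat.ofDigits_append, hblock, hlen]
    have h0 : Nat.ofDigits g (List.replicate p d₁) ≡ 0 [MOD a] :=
      (Nat.modEq_zero_iff_dvd).2 hV
    have := (Nat.ModEq.refl (b - d₁)).add (h0.add (hgp.mul ih'))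
    simpa [add_assoc] using this

lemma ofDigits_replicate (g c : ℕ) :
    ∀ n : ℕ, (Nat.ofDigits g (List.replicate n c) : ℤ) * ((g : ℤ) - 1)
      = c * g ^ n - c := by
  intro n
  induction n with
  | zero => norm_num [Nat.ofDigits_nil]; left; rfl
  | succ n ih =>
    rw [List.replicate_succ]
    push_cast at ih ⊢
    rw [show Nat.ofDigits ((g : ℤ)) (c :: List.replicate n c)
        = (c : ℤ) + (g : ℤ) * Nat.ofDigits ((g : ℤ)) (List.replicate n c) from rfl]
    linear_combination (g : ℤ) * ih

/-- Bézout lemma: there is a word `w` over the digit set `D` whose length is a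
(positive) multiple of `p := a' * φ(a(g-1))`, whose base-`g` value is `≡ δ (mod a)`
and whose digit sum is `≡ δ (mod a')`, where
`δ := gcd(a*a', d₂ - d₁, …, d_t - d₁)` with `d₁` the least digit of `D`. -/
theorem bezout_word (g a a' : ℕ) (hg : 2 ≤ g) (ha : 1 ≤ a) (ha' : 1 ≤ a')
    (hgcd : Nat.gcd g a = 1)
    (D : Finset ℕ) (hD : D.Nonempty) (hDsub : D ⊆ Finset.range g) (hcard : 2 ≤ D.card) :
    ∃ w : List ℕ, w ≠ [] ∧ (∀ d ∈ w, d ∈ D) ∧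
      (a' * Nat.totient (a * (g - 1))) ∣ w.length ∧
      Nat.ofDigits g w ≡ Nat.gcd (a * a') (D.gcd fun d => d - D.min' hD) [MOD a] ∧
      w.sum ≡ Nat.gcd (a * a') (D.gcd fun d => d - D.min' hD) [MOD a'] := by
  classical
  set d₁ := D.min' hD with hd₁
  set f : ℕ → ℕ := fun d => d - d₁ with hf
  set M := a * (g - 1) with hM
  set p := a' * Nat.totient M with hpdef
  set m := a * a' with hm
  set E := D.gcd f with hE
  set δ := Nat.gcd m E with hδ
  have hM0 : 0 < M := Nat.mul_pos ha (by omega)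
  have hm0 : 0 < m := Nat.mul_pos ha ha'
  have hp0 : 0 < p := Nat.mul_pos ha' (Nat.totient_pos.2 hM0)
  -- coprimality of g with M
  have hcopA : Nat.Coprime g a := hgcd
  have hcopG : Nat.Coprime g (g - 1) := by
    have : g - 1 + 1 = g := by omega
    rw [← this]
    simp [Nat.Coprime]
  have hcop : Nat.Coprime g M := Nat.Coprime.mul_right hcopA hcopG
  -- Euler: g^p ≡ 1 mod M
  have hEuler : g ^ p ≡ 1 [MOD M] := by
    have h1 : g ^ Nat.totient M ≡ 1 [MOD M] := Nat.ModEq.pow_totient hcop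
    have : (g ^ Nat.totient M) ^ a' ≡ 1 ^ a' [MOD M] := h1.pow a'
    simpa [← pow_mul, mul_comm, hpdef] using this
  have hgp1 : 1 ≤ g ^ p := Nat.one_le_pow _ _ (by omega)
  have hMdvd : M ∣ g ^ p - 1 := (Nat.modEq_iff_dvd' hgp1).1 hEuler.symm
  -- a divides the value of the pure block
  have haV : a ∣ Nat.ofDigits g (List.replicate p d₁) := by
    have hkey := ofDigits_replicate g d₁ p
    have hMdvdZ : (M : ℤ) ∣ (g : ℤ) ^ p - 1 := by
      have := Int.natCast_dvd_natCast.2 hMdvd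
      rwa [Nat.cast_sub hgp1, Nat.cast_pow, Nat.cast_one] at this
    have hdvd2 : (a : ℤ) * ((g : ℤ) - 1) ∣
        (Nat.ofDigits g (List.replicate p d₁) : ℤ) * ((g : ℤ) - 1) := by
      rw [hkey]
      have : (M : ℤ) = (a : ℤ) * ((g : ℤ) - 1) := by
        rw [hM]; push_cast [Nat.cast_sub (by omega : 1 ≤ g)]; ring
      rw [← this]
      exact hMdvdZ.trans ⟨d₁, by ring⟩
    have hg1 : ((g : ℤ) - 1) ≠ 0 := by
      have : (2 : ℤ) ≤ g := by exact_mod_cast hg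
      omega
    have : (a : ℤ) ∣ (Nat.ofDigits g (List.replicate p d₁) : ℤ) :=
      (mul_dvd_mul_iff_right hg1).1 hdvd2
    exact_mod_cast this
  -- g^p ≡ 1 mod a
  have hgpa : g ^ p ≡ 1 [MOD a] := hEuler.of_dvd (dvd_mul_right a (g - 1))
  -- find the list of "bumps"
  have hbezδ := Nat.gcd_eq_gcd_ab m E
  obtain ⟨k, hk⟩ := exists_nat_cast_eq m hm0 (Nat.gcdB m E)
  have hδmod : ((δ : ℕ) : ZMod m) = (k : ZMod m) * ((E : ℕ) : ZMod m) := by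
    have := congrArg (fun z : ℤ => (z : ZMod m)) hbezδ
    push_cast at this
    rw [ZMod.natCast_self] at this
    rw [hk]
    push_cast
    rw [this]
    ring
  obtain ⟨bs, hbsD, hbssum⟩ := bezout_list m hm0 f D k
  have hS : (bs.map f).sum ≡ δ [MOD m] := by
    rw [← ZMod.natCast_eq_natCast_iff]
    rw [hbssum, hδmod]
  -- the word
  refine ⟨wordOf p d₁ (d₁ :: bs), ?_, ?_, ?_, ?_, ?_⟩
  · have : (wordOf p d₁ (d₁ :: bs)).length = p * (d₁ :: bs).length :=
      wordOf_length p d₁ hp0 _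
    intro hnil
    rw [hnil] at this
    simp at this
    omega
  · intro d hd
    rcases wordOf_mem p d₁ _ d hd with h | h
    · rw [h]; exact D.min'_mem hD
    · rcases List.mem_cons.1 h with h | h
      · rw [h]; exact D.min'_mem hD
      · exact hbsD d h
  · rw [wordOf_length p d₁ hp0]
    exact dvd_mul_right _ _
  · have hle : ∀ b ∈ (d₁ :: bs), d₁ ≤ b := by
      intro b hb
      rcases List.mem_cons.1 hb with h | h
      · omega
      · exact D.min'_le b (hbsD b h)
    have hv := wordOf_value g a p d₁ hp0 haV hgpa (d₁ :: bs) hle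
    have hsum_eq : ((d₁ :: bs).map (fun b => b - d₁)).sum = (bs.map f).sum := by
      simp [hf]
    rw [hsum_eq] at hv
    exact hv.trans (hS.of_dvd (dvd_mul_right a a'))
  · have hle : ∀ b ∈ (d₁ :: bs), d₁ ≤ b := by
      intro b hb
      rcases List.mem_cons.1 hb with h | h
      · omega
      · exact D.min'_le b (hbsD b h)
    rw [wordOf_sum p d₁ hp0 _ hle]
    have hsum_eq : ((d₁ :: bs).map (fun b => b - d₁)).sum = (bs.map f).sum := by
      simp [hf]
    rw [hsum_eq]
    have h0 : p * d₁ * (d₁ :: bs).length ≡ 0 [MOD a'] :=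
      (Nat.modEq_zero_iff_dvd).2 ⟨Nat.totient M * d₁ * (d₁ :: bs).length, by rw [hpdef]; ring⟩
    have := (hS.of_dvd (dvd_mul_left a' a)).add h0
    simpa using this
end

section
/- Let M be an irreducible and aperiodic stochastic matrix on a finite state space S that is doubly stochastic. Then for the Markov chain X with transition matrix M and any initial distribution μ, there exist C > 0 and ρ ∈ (0,1) such that |P(X_n = s) − 1/|S|| ≤ C·ρ^n for all n ∈ ℕ and s ∈ S; equivalently, |(μ M^n)(s) − 1/|S|| ≤ C ρ^n. -/
lemma numsem {A : Set ℕ} (hadd : ∀ {m n : ℕ}, m ∈ A → n ∈ A → m + n ∈ A)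
    {a : ℕ} (ha : a ∈ A) (ha0 : 0 < a)
    (hgcd : ∀ d : ℕ, (∀ n ∈ A, d ∣ n) → d = 1) :
    ∃ N : ℕ, ∀ n ≥ N, n ∈ A := by
  haveI : NeZero a := ⟨ha0.ne'⟩
  have hsmul : ∀ (z : ZMod a), (∃ n ∈ A, (n : ZMod a) = z) → ∀ j : ℕ,
      ∃ n ∈ A, (n : ZMod a) = (j + 1) • z := by
    rintro z ⟨n, hn, rfl⟩ j
    induction j with
    | zero => exact ⟨n, hn, by simp⟩
    | succ k ih =>
      obtain ⟨m, hm, hmz⟩ := ih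
      exact ⟨m + n, hadd hm hn, by push_cast [hmz, succ_nsmul]; ring⟩
  let H : AddSubgroup (ZMod a) :=
    { carrier := {z | ∃ n ∈ A, (n : ZMod a) = z}
      zero_mem' := ⟨a, ha, by simp⟩
      add_mem' := by
        rintro x y ⟨n, hn, rfl⟩ ⟨m, hm, rfl⟩
        exact ⟨n + m, hadd hn hm, by push_cast; ring⟩
      neg_mem' := by
        rintro x hx
        rcases eq_or_ne x 0 with rfl | hx0
        · simpa using ⟨a, ha, by simp⟩
        · have hk2 : 2 ≤ addOrderOf x := by
            rcases Nat.lt_or_ge (addOrderOf x) 2 with h | h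
            · interval_cases h' : addOrderOf x
              · exact absurd (addOrderOf_eq_zero_iff.mp h')
                  (by simp [isOfFinAddOrder_of_finite x])
              · exact absurd (AddMonoid.addOrderOf_eq_one_iff.mp h') hx0
            · exact h
          obtain ⟨n, hn, hnx⟩ := hsmul x hx (addOrderOf x - 2)
          refine ⟨n, hn, ?_⟩
          rw [hnx]
          have heq : (addOrderOf x - 2 + 1) • x + x = addOrderOf x • x := by
            rw [← succ_nsmul]; congr 1; omega
          exact eq_neg_of_add_eq_zero_left (heq.trans (addOrderOf_nsmul_eq_zero x)) }
  -- 1 ∈ H via a cyclic subgroup of ℤ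
  have hHtop : ∀ z : ZMod a, z ∈ H := by
    have h1 : (1 : ZMod a) ∈ H := by
      set K : AddSubgroup ℤ := AddSubgroup.closure ((Nat.cast : ℕ → ℤ) '' A) with hK
      obtain ⟨g, hg⟩ := Int.subgroup_cyclic K
      have hdvd : ∀ n ∈ A, g.natAbs ∣ n := by
        intro n hn
        have : (n : ℤ) ∈ K := AddSubgroup.subset_closure ⟨n, hn, rfl⟩
        rw [hg, AddSubgroup.mem_closure_singleton] at this
        obtain ⟨k, hk⟩ := this
        exact Int.natCast_dvd_natCast.mp (by simpa [Int.natAbs_dvd] using Dvd.intro_left k hk)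
      have hg1 : g.natAbs = 1 := hgcd _ hdvd
      have h1K : (1 : ℤ) ∈ K := by
        rw [hg, AddSubgroup.mem_closure_singleton]
        rcases Int.natAbs_eq_iff.mp hg1 with h | h
        · exact ⟨1, by simp [h]⟩
        · exact ⟨-1, by simp [h]⟩
      have hle : K ≤ H.comap (Int.castAddHom (ZMod a)) := by
        rw [hK]
        apply AddSubgroup.closure_le _ |>.mpr
        rintro x ⟨n, hn, rfl⟩
        exact ⟨n, hn, by simp⟩
      simpa using hle h1K
    intro z
    have := H.nsmul_mem h1 z.val
    have hz : (z.val : ZMod a) = z := ZMod.natCast_rightInverse z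
    simpa [nsmul_eq_mul, hz] using this
  -- choose representatives
  choose rep hrepA hrepz using fun z : ZMod a => hHtop z
  refine ⟨Finset.univ.sup rep + 1, fun n hn => ?_⟩
  set z := (n : ZMod a)
  have hle : rep z ≤ n := le_trans (le_trans (Finset.le_sup (Finset.mem_univ z)) (Nat.le_succ _)) hn
  have hmod : rep z ≡ n [MOD a] := (ZMod.natCast_eq_natCast_iff _ _ _).mp (hrepz z)
  have hdvd : a ∣ n - rep z := (Nat.modEq_iff_dvd' hle).mp hmod
  obtain ⟨k, hk⟩ := hdvd
  have hrepr : n = rep z + a * k := by omega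
  rw [hrepr]
  clear hk hrepr hmod hle
  induction k with
  | zero => simpa using hrepA z
  | succ j ih =>
    have : rep z + a * (j + 1) = (rep z + a * j) + a := by ring
    rw [this]
    exact hadd ih ha

section
variable {S : Type*} [Fintype S] [DecidableEq S] [Nonempty S]

lemma pow_nonneg' (M : Matrix S S ℝ) (h0 : ∀ s s', 0 ≤ M s s') :
    ∀ n : ℕ, ∀ s s', 0 ≤ (M ^ n) s s' := by
  intro n
  induction n with
  | zero => intro s s'; simp [Matrix.one_apply]; positivity
  | succ k ih =>
    intro s s'
    rw [pow_succ, Matrix.mul_apply]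
    exact Finset.sum_nonneg fun t _ => mul_nonneg (ih s t) (h0 t s')

lemma pow_row (M : Matrix S S ℝ) (hrow : ∀ s, ∑ s', M s s' = 1) :
    ∀ n : ℕ, ∀ s, ∑ s', (M ^ n) s s' = 1 := by
  intro n
  induction n with
  | zero => intro s; simp [Matrix.one_apply]
  | succ k ih =>
    intro s
    simp only [pow_succ, Matrix.mul_apply]
    rw [Finset.sum_comm]
    calc ∑ t, ∑ s', (M ^ k) s t * M t s' = ∑ t, (M ^ k) s t * ∑ s', M t s' := by
          simp [Finset.mul_sum]
      _ = 1 := by simp [hrow, ih]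

lemma pow_entry_mul_le (M : Matrix S S ℝ) (h0 : ∀ s s', 0 ≤ M s s')
    (m n : ℕ) (s t u : S) : (M ^ m) s t * (M ^ n) t u ≤ (M ^ (m + n)) s u := by
  rw [pow_add, Matrix.mul_apply]
  exact Finset.single_le_sum
    (fun i _ => mul_nonneg (pow_nonneg' M h0 m s i) (pow_nonneg' M h0 n i u))
    (Finset.mem_univ t)

end

section
variable {S : Type*} [Fintype S] [DecidableEq S] [Nonempty S]

lemma contract (P : Matrix S S ℝ) (δ : ℝ) (hδ : 0 ≤ δ) (hP : ∀ s s', δ ≤ P s s')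
    (hProw : ∀ s, ∑ s', P s s' = 1) (η : S → ℝ) (hη : ∑ s, η s = 0) :
    ∑ s', |Matrix.vecMul η P s'| ≤ (1 - (Fintype.card S : ℝ) * δ) * ∑ s, |η s| := by
  have key : ∀ s', Matrix.vecMul η P s' = ∑ s, η s * (P s s' - δ) := by
    intro s'
    simp only [Matrix.vecMul, dotProduct, mul_sub]
    rw [Finset.sum_sub_distrib, ← Finset.sum_mul, hη, zero_mul, sub_zero]
  calc ∑ s', |Matrix.vecMul η P s'|
      ≤ ∑ s', ∑ s, |η s| * (P s s' - δ) := by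
        refine Finset.sum_le_sum fun s' _ => ?_
        rw [key]
        refine (Finset.abs_sum_le_sum_abs _ _).trans (Finset.sum_le_sum fun s _ => ?_)
        rw [abs_mul, abs_of_nonneg (sub_nonneg.mpr (hP s s'))]
    _ = ∑ s, |η s| * (1 - (Fintype.card S : ℝ) * δ) := by
        rw [Finset.sum_comm]
        refine Finset.sum_congr rfl fun s _ => ?_
        rw [← Finset.mul_sum, Finset.sum_sub_distrib, hProw,
          Finset.sum_const, Finset.card_univ, nsmul_eq_mul]
    _ = (1 - (Fintype.card S : ℝ) * δ) * ∑ s, |η s| := by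
        rw [← Finset.sum_mul, mul_comm]

lemma sum_vecMul (P : Matrix S S ℝ) (hProw : ∀ s, ∑ s', P s s' = 1) (η : S → ℝ) :
    ∑ s', Matrix.vecMul η P s' = ∑ s, η s := by
  simp only [Matrix.vecMul, dotProduct]
  rw [Finset.sum_comm]
  simp [← Finset.mul_sum, hProw]

end

section
variable {S : Type*} [Fintype S] [DecidableEq S] [Nonempty S]

lemma pow_col' (M : Matrix S S ℝ) (hcol : ∀ s', ∑ s, M s s' = 1) :
    ∀ n : ℕ, ∀ s', ∑ s, (M ^ n) s s' = 1 := by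
  intro n
  induction n with
  | zero => intro s'; simp [Matrix.one_apply]
  | succ k ih =>
    intro s'
    simp only [pow_succ, Matrix.mul_apply]
    rw [Finset.sum_comm]
    calc ∑ t, ∑ s, (M ^ k) s t * M t s' = ∑ t, (∑ s, (M ^ k) s t) * M t s' := by
          simp [Finset.sum_mul]
      _ = 1 := by simp [ih, hcol]

lemma primitive (M : Matrix S S ℝ) (h0 : ∀ s s', 0 ≤ M s s')
    (hirr : ∀ s s', ∃ n : ℕ, 0 < n ∧ 0 < (M ^ n) s s')
    (haper : ∀ s, ∀ d : ℕ, (∀ n : ℕ, 0 < n → 0 < (M ^ n) s s → d ∣ n) → d = 1) :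
    ∃ N : ℕ, 0 < N ∧ ∀ s s', 0 < (M ^ N) s s' := by
  have hret : ∀ s : S, ∃ N : ℕ, ∀ n ≥ N, 0 < (M ^ n) s s := by
    intro s
    have hadd : ∀ {m n : ℕ}, m ∈ {k : ℕ | 0 < (M ^ k) s s} → n ∈ {k : ℕ | 0 < (M ^ k) s s} →
        m + n ∈ {k : ℕ | 0 < (M ^ k) s s} := by
      intro m n hm hn
      exact lt_of_lt_of_le (mul_pos hm hn) (pow_entry_mul_le M h0 m n s s s)
    obtain ⟨a, ha0, hapos⟩ := hirr s s
    exact numsem hadd hapos ha0 (fun d hd => haper s d fun n hn hpos => hd n hpos)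
  choose Ns hNs using hret
  choose m hm0 hmpos using fun s s' => hirr s s'
  set N1 := Finset.univ.sup Ns with hN1
  set Mx := Finset.univ.sup (fun p : S × S => m p.1 p.2) with hMx
  refine ⟨N1 + Mx, ?_, ?_⟩
  · have : 0 < m (Classical.arbitrary S) (Classical.arbitrary S) :=
      hm0 (Classical.arbitrary S) (Classical.arbitrary S)
    have hle : m (Classical.arbitrary S) (Classical.arbitrary S) ≤ Mx :=
      Finset.le_sup (f := fun p : S × S => m p.1 p.2)
        (Finset.mem_univ (Classical.arbitrary S, Classical.arbitrary S))
    omega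
  · intro s s'
    have hmle : m s s' ≤ Mx :=
      Finset.le_sup (f := fun p : S × S => m p.1 p.2) (Finset.mem_univ (s, s'))
    have hNsle : Ns s ≤ N1 := Finset.le_sup (Finset.mem_univ s)
    have h1 : 0 < (M ^ (N1 + Mx - m s s')) s s := hNs s _ (by omega)
    have h2 : 0 < (M ^ (m s s')) s s' := hmpos s s'
    have h3 := pow_entry_mul_le M h0 (N1 + Mx - m s s') (m s s') s s s'
    have h4 : N1 + Mx - m s s' + m s s' = N1 + Mx := by omega
    rw [h4] at h3
    exact lt_of_lt_of_le (mul_pos h1 h2) h3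

end

/-- Convergence of an irreducible aperiodic doubly stochastic Markov chain on a
finite state space to the uniform distribution, at a geometric rate, for any
initial distribution `μ`. -/
theorem doubly_stochastic_markov_convergence {S : Type*} [Fintype S] [DecidableEq S]
    [Nonempty S] (M : Matrix S S ℝ)
    (hentries : ∀ s s', 0 ≤ M s s' ∧ M s s' ≤ 1)
    (hrow : ∀ s, ∑ s', M s s' = 1)
    (hcol : ∀ s', ∑ s, M s s' = 1)
    (hirr : ∀ s s', ∃ n : ℕ, 0 < n ∧ 0 < (M ^ n) s s')
    (haper : ∀ s, ∀ d : ℕ, (∀ n : ℕ, 0 < n → 0 < (M ^ n) s s → d ∣ n) → d = 1)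
    (μ : S → ℝ) (hμ0 : ∀ s, 0 ≤ μ s) (hμ1 : ∑ s, μ s = 1) :
    ∃ C > 0, ∃ ρ ∈ Set.Ioo (0 : ℝ) 1, ∀ n : ℕ, ∀ s : S,
      |Matrix.vecMul μ (M ^ n) s - 1 / (Fintype.card S : ℝ)| ≤ C * ρ ^ n := by
  have h0 : ∀ s s', 0 ≤ M s s' := fun s s' => (hentries s s').1
  obtain ⟨N, hN0, hNpos⟩ := primitive M h0 hirr haper
  set c : ℝ := (Fintype.card S : ℝ) with hc
  have hcpos : (0 : ℝ) < c := by
    simp [hc, Fintype.card_pos]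
  -- the minimal entry of M^N, capped at 1/(2c)
  set δ0 : ℝ := Finset.univ.inf' (Finset.univ_nonempty (α := S × S))
      (fun p : S × S => (M ^ N) p.1 p.2) with hδ0
  set δ : ℝ := min δ0 (1 / (2 * c)) with hδ
  have hδpos : 0 < δ := by
    apply lt_min
    · exact (Finset.lt_inf'_iff _).mpr fun p _ => hNpos p.1 p.2
    · positivity
  have hδle : ∀ s s', δ ≤ (M ^ N) s s' := fun s s' =>
    le_trans (min_le_left _ _) (Finset.inf'_le _ (Finset.mem_univ (s, s')))
  set r : ℝ := 1 - c * δ with hr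
  have hr1 : r < 1 := by
    have : 0 < c * δ := mul_pos hcpos hδpos
    simp [hr]; linarith
  have hr0 : 0 < r := by
    have h1 : c * δ ≤ c * (1 / (2 * c)) :=
      mul_le_mul_of_nonneg_left (min_le_right _ _) hcpos.le
    have h2 : c * (1 / (2 * c)) = 1 / 2 := by field_simp
    simp only [hr]; rw [h2] at h1; linarith
  -- the centered vector
  set η : S → ℝ := fun s => μ s - 1 / c with hη
  have hηsum : ∑ s, η s = 0 := by
    simp only [hη, Finset.sum_sub_distrib, hμ1, Finset.sum_const, Finset.card_univ,
      nsmul_eq_mul]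
    rw [hc]; field_simp; norm_num
  have hηL1 : ∑ s, |η s| ≤ 2 := by
    calc ∑ s, |η s| ≤ ∑ s, (μ s + 1 / c) := by
          refine Finset.sum_le_sum fun s _ => ?_
          rw [hη]
          calc |μ s - 1 / c| ≤ |μ s| + |1 / c| := abs_sub _ _
            _ = μ s + 1 / c := by
                rw [abs_of_nonneg (hμ0 s), abs_of_nonneg (by positivity)]
      _ = 2 := by
          rw [Finset.sum_add_distrib, hμ1, Finset.sum_const, Finset.card_univ,
            nsmul_eq_mul, hc]
          field_simp
          norm_num
  -- identity: vecMul η (M^n) s = vecMul μ (M^n) s - 1/c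
  have hident : ∀ n : ℕ, ∀ s : S,
      Matrix.vecMul η (M ^ n) s = Matrix.vecMul μ (M ^ n) s - 1 / c := by
    intro n s
    simp only [Matrix.vecMul, dotProduct, hη, sub_mul]
    rw [Finset.sum_sub_distrib]
    congr 1
    rw [← Finset.mul_sum, pow_col' M hcol n s, mul_one]
  -- contraction along multiples of N
  have hiter : ∀ q : ℕ, (∑ s, Matrix.vecMul η (M ^ (N * q)) s = 0) ∧
      (∑ s', |Matrix.vecMul η (M ^ (N * q)) s'| ≤ r ^ q * 2) := by
    intro q
    induction q with
    | zero =>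
      simp only [Nat.mul_zero, pow_zero, Matrix.vecMul_one]
      exact ⟨hηsum, by simpa using hηL1⟩
    | succ k ih =>
      have hsplit : M ^ (N * (k + 1)) = M ^ (N * k) * M ^ N := by
        rw [← pow_add]; ring_nf
      have hvm : Matrix.vecMul η (M ^ (N * (k + 1))) =
          Matrix.vecMul (Matrix.vecMul η (M ^ (N * k))) (M ^ N) := by
        rw [hsplit, Matrix.vecMul_vecMul]
      constructor
      · rw [hvm, sum_vecMul _ (pow_row M hrow N) _]
        exact ih.1
      · rw [hvm]
        calc ∑ s', |Matrix.vecMul (Matrix.vecMul η (M ^ (N * k))) (M ^ N) s'|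
            ≤ (1 - c * δ) * ∑ s, |Matrix.vecMul η (M ^ (N * k)) s| := by
              have := contract (M ^ N) δ hδpos.le hδle (pow_row M hrow N)
                (Matrix.vecMul η (M ^ (N * k))) ih.1
              rw [mul_comm c δ] at this ⊢
              exact this
          _ ≤ r * (r ^ k * 2) := by
              rw [← hr]
              exact mul_le_mul_of_nonneg_left ih.2 hr0.le
          _ = r ^ (k + 1) * 2 := by ring
  set ρ : ℝ := r ^ ((1 : ℝ) / N) with hρ
  have hNR : (0 : ℝ) < (N : ℝ) := by exact_mod_cast hN0
  refine ⟨2 / r, by positivity, ρ, ⟨Real.rpow_pos_of_pos hr0 _,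
    Real.rpow_lt_one hr0.le hr1 (by positivity)⟩, ?_⟩
  intro n s
  set q : ℕ := n / N with hq
  have hnq : n = N * q + n % N := (Nat.div_add_mod n N).symm
  have hvm : Matrix.vecMul η (M ^ n) =
      Matrix.vecMul (Matrix.vecMul η (M ^ (N * q))) (M ^ (n % N)) := by
    conv_lhs => rw [hnq]
    rw [pow_add, Matrix.vecMul_vecMul]
  have hbound : |Matrix.vecMul η (M ^ n) s| ≤ r ^ q * 2 := by
    calc |Matrix.vecMul η (M ^ n) s| ≤ ∑ s', |Matrix.vecMul η (M ^ n) s'| :=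
          Finset.single_le_sum (f := fun s' => |Matrix.vecMul η (M ^ n) s'|)
            (fun s' _ => abs_nonneg _) (Finset.mem_univ s)
      _ ≤ (1 - (Fintype.card S : ℝ) * 0) * ∑ s', |Matrix.vecMul η (M ^ (N * q)) s'| := by
          rw [hvm]
          exact contract (M ^ (n % N)) 0 le_rfl
            (fun s s' => pow_nonneg' M h0 _ s s')
            (pow_row M hrow (n % N)) (Matrix.vecMul η (M ^ (N * q))) (hiter q).1
      _ ≤ r ^ q * 2 := by
          rw [mul_zero, sub_zero, one_mul]; exact (hiter q).2
  have hrpow : r ^ q * 2 ≤ 2 / r * ρ ^ n := by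
    have hρn : ρ ^ n = r ^ ((n : ℝ) / N) := by
      rw [hρ, ← Real.rpow_natCast (r ^ ((1:ℝ)/N)) n, ← Real.rpow_mul hr0.le]
      congr 1
      field_simp
    have hqn : (n : ℝ) / N ≤ (q : ℝ) + 1 := by
      have hmod := Nat.mod_lt n hN0
      have hlt : n < N * (q + 1) := by
        rw [Nat.mul_succ, hnq]
        exact Nat.add_lt_add_left hmod _
      have hltR : (n : ℝ) < (N : ℝ) * ((q : ℝ) + 1) := by exact_mod_cast hlt
      rw [div_le_iff₀ hNR]
      nlinarith [hltR]
    have hkey : r ^ ((q : ℝ) + 1) ≤ r ^ ((n : ℝ) / N) :=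
      Real.rpow_le_rpow_of_exponent_ge hr0 hr1.le hqn
    have hq1 : r ^ ((q : ℝ) + 1) = r ^ q * r := by
      rw [Real.rpow_add hr0, Real.rpow_one, Real.rpow_natCast]
    rw [hq1] at hkey
    rw [hρn]
    rw [div_mul_eq_mul_div, le_div_iff₀ hr0]
    nlinarith [hkey]
  have hfinal := hbound.trans hrpow
  rw [hident n s] at hfinal
  convert hfinal using 3
end

section
/- Let g ≥ 2 and D = {d₁,…,d_t} ⊆ {0,…,g−1} with t ≥ 2 and d₁ < ⋯ < d_t. Let a be a positive integer with gcd(g, a) = 1 and set δ := gcd(a, d₂−d₁, …, d_t−d₁). If δ ≠ 1 and d₁ ≢ 0 (mod δ), then there exist residues b ∈ Z_a for which the set {n ∈ C_{g,D} : n ≡ b (mod a)} is nonempty but the relative density of this set inside C_{g,D} (over intervals [0, N)) does not converge to a positive limit; more precisely, for every b ∈ Z_a the limit of |{n ∈ C_{g,D} : n ≡ b (mod a)} ∩ [0,N)| / |C_{g,D} ∩ [0,N)| is either 0 or does not exist. -/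
open Filter

/-- Auxiliary: the finset of base-`g` numbers with exactly `j` digits all in `D`. -/
def digitBlock (g : ℕ) (D : Finset ℕ) (j : ℕ) : Finset ℕ :=
  (Fintype.piFinset fun _ : Fin j => D).image fun f => Nat.ofDigits g (List.ofFn f)

lemma digitBlock_card (g : ℕ) (hg : 2 ≤ g) (D : Finset ℕ) (hDsub : D ⊆ Finset.range g)
    (hD0 : 0 ∉ D) (j : ℕ) : (digitBlock g D j).card = D.card ^ j := by
  rw [digitBlock, Finset.card_image_of_injOn, Fintype.card_piFinset_const]
  intro f₁ h₁ f₂ h₂ h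
  simp only [Finset.mem_coe, Fintype.mem_piFinset] at h₁ h₂
  have key : ∀ f : Fin j → ℕ, (∀ i, f i ∈ D) →
      Nat.digits g (Nat.ofDigits g (List.ofFn f)) = List.ofFn f := by
    intro f hf
    refine Nat.digits_ofDigits g (by omega) _ (fun l hl => ?_) (fun hne h0 => ?_)
    · rw [List.mem_ofFn] at hl
      obtain ⟨i, rfl⟩ := hl
      exact Finset.mem_range.mp (hDsub (hf i))
    · have hmem := List.getLast_mem hne
      rw [List.mem_ofFn] at hmem
      obtain ⟨i, hi⟩ := hmem
      exact hD0 (by rw [← h0, ← hi]; exact hf i)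
  have h' : Nat.ofDigits g (List.ofFn f₁) = Nat.ofDigits g (List.ofFn f₂) := h
  have : List.ofFn f₁ = List.ofFn f₂ := by
    rw [← key f₁ h₁, ← key f₂ h₂, h']
  exact List.ofFn_injective this

/-- If `δ := gcd(a, d₂-d₁, …, d_t-d₁) ≠ 1` and `d₁ ≢ 0 (mod δ)`, then there is a
residue class which meets `C_{g,D}` but whose relative density in `C_{g,D}` does
not converge to a positive limit; more precisely, for every residue `b`, the
relative density either converges to `0` or does not converge at all. -/
theorem missing_digits_degenerate_distribution (g a : ℕ) (hg : 2 ≤ g) (ha : 1 ≤ a)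
    (hgcd : Nat.gcd g a = 1)
    (D : Finset ℕ) (hD : D.Nonempty) (hDsub : D ⊆ Finset.range g) (hcard : 2 ≤ D.card)
    (hδ : Nat.gcd a (D.gcd fun d => d - D.min' hD) ≠ 1)
    (hd1 : ¬ (Nat.gcd a (D.gcd fun d => d - D.min' hD)) ∣ D.min' hD)
    (C : Set ℕ)
    (hC : C = {m : ℕ | ∃ w : List ℕ, w ≠ [] ∧ (∀ d ∈ w, d ∈ D) ∧ Nat.ofDigits g w = m}) :
    (∃ b < a, (C ∩ {n | n % a = b}).Nonempty ∧ ∀ L : ℝ, 0 < L →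
      ¬ Tendsto (fun N : ℕ =>
          ((C ∩ {n | n % a = b} ∩ Set.Iio N).ncard : ℝ) / ((C ∩ Set.Iio N).ncard))
        atTop (nhds L)) ∧
    (∀ b < a, ∀ L : ℝ,
      Tendsto (fun N : ℕ =>
          ((C ∩ {n | n % a = b} ∩ Set.Iio N).ncard : ℝ) / ((C ∩ Set.Iio N).ncard))
        atTop (nhds L) → L = 0) := by
  set d1 : ℕ := D.min' hD with hd1def
  set δ : ℕ := Nat.gcd a (D.gcd fun d => d - d1) with hδdef
  have hg1 : 1 < g := by omega
  have hδa : δ ∣ a := Nat.gcd_dvd_left _ _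
  have hδpos : 0 < δ := Nat.gcd_pos_of_pos_left _ (by omega)
  haveI : NeZero δ := ⟨by omega⟩
  have hd1D : d1 ∈ D := D.min'_mem hD
  have hd1pos : d1 ≠ 0 := by
    intro h0
    exact hd1 (by rw [h0]; exact dvd_zero δ)
  have hD0 : 0 ∉ D := by
    intro h0
    exact hd1pos (Nat.le_zero.mp (D.min'_le 0 h0))
  -- characterization of C via digits
  have hCc : ∀ m : ℕ, m ∈ C ↔ (Nat.digits g m ≠ [] ∧ ∀ d ∈ Nat.digits g m, d ∈ D) := by
    intro m
    rw [hC]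
    constructor
    · rintro ⟨w, hne, hw, rfl⟩
      have hdig : Nat.digits g (Nat.ofDigits g w) = w := by
        refine Nat.digits_ofDigits g hg1 w (fun l hl => Finset.mem_range.mp (hDsub (hw l hl)))
          (fun h h0 => hD0 ?_)
        rw [← h0]
        exact hw _ (List.getLast_mem h)
      rw [hdig]
      exact ⟨hne, hw⟩
    · rintro ⟨h1, h2⟩
      exact ⟨Nat.digits g m, h1, h2, Nat.ofDigits_digits g m⟩
  -- membership in digit blocks
  have hblock : ∀ j : ℕ, C ∩ Set.Ico (g ^ j) (g ^ (j + 1)) = ↑(digitBlock g D (j + 1)) := by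
    intro j
    ext m
    simp only [Set.mem_inter_iff, Set.mem_Ico, digitBlock, Finset.coe_image, Set.mem_image,
      Finset.mem_coe, Fintype.mem_piFinset]
    constructor
    · rintro ⟨hmC, hlo, hhi⟩
      have hm0 : m ≠ 0 := by
        have : 0 < g ^ j := Nat.pow_pos (by omega)
        omega
      have hlen : (Nat.digits g m).length = j + 1 := by
        rw [Nat.digits_len g m hg1 hm0, Nat.log_eq_of_pow_le_of_lt_pow hlo hhi]
      obtain ⟨-, hdigD⟩ := (hCc m).mp hmC
      refine ⟨fun i => (Nat.digits g m).getD i 0, fun i => ?_, ?_⟩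
      · show (Nat.digits g m).getD (↑i) 0 ∈ D
        rw [List.getD_eq_getElem _ _ (by rw [hlen]; exact i.isLt)]
        exact hdigD _ (List.getElem_mem _)
      · have hofn : List.ofFn (fun i : Fin (j+1) => (Nat.digits g m).getD i 0)
            = Nat.digits g m := by
          refine List.ext_getElem (by simp [hlen]) (fun i h1 h2 => ?_)
          rw [List.getElem_ofFn]
          exact List.getD_eq_getElem _ _ h2
        rw [hofn, Nat.ofDigits_digits]
    · rintro ⟨f, hf, rfl⟩
      have hne : List.ofFn f ≠ [] := by
        simp [← List.length_pos_iff]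
      have hwD : ∀ d ∈ List.ofFn f, d ∈ D := by
        intro d hd
        rw [List.mem_ofFn] at hd
        obtain ⟨i, rfl⟩ := hd
        exact hf i
      have hmC : Nat.ofDigits g (List.ofFn f) ∈ C := by
        rw [hC]; exact ⟨List.ofFn f, hne, hwD, rfl⟩
      have hdig : Nat.digits g (Nat.ofDigits g (List.ofFn f)) = List.ofFn f := by
        refine Nat.digits_ofDigits g hg1 _ (fun l hl => Finset.mem_range.mp (hDsub (hwD l hl)))
          (fun h h0 => hD0 ?_)
        rw [← h0]; exact hwD _ (List.getLast_mem h)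
      have hlen : (Nat.digits g (Nat.ofDigits g (List.ofFn f))).length = j + 1 := by
        rw [hdig, List.length_ofFn]
      have hm0 : Nat.ofDigits g (List.ofFn f) ≠ 0 := by
        intro h
        rw [h] at hlen
        simp at hlen
      refine ⟨hmC, ?_, ?_⟩
      · have hle := Nat.base_pow_length_digits_le g _ hg1 hm0
        rw [hlen, pow_succ'] at hle
        exact Nat.le_of_mul_le_mul_left hle (by omega)
      · have hlt := Nat.lt_base_pow_length_digits (m := Nat.ofDigits g (List.ofFn f)) hg1
        rwa [hlen] at hlt
  -- counting
  set t : ℕ := D.card with htdef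
  have hcount : ∀ n : ℕ, (C ∩ Set.Iio (g ^ n)).ncard = ∑ j ∈ Finset.range n, t ^ (j + 1) := by
    intro n
    induction n with
    | zero =>
      have hemp : C ∩ Set.Iio (g ^ 0) = ∅ := by
        ext m
        simp only [Set.mem_inter_iff, Set.mem_Iio, pow_zero, Nat.lt_one_iff,
          Set.mem_empty_iff_false, iff_false, not_and]
        intro hmC hm
        obtain ⟨h1, -⟩ := (hCc m).mp hmC
        rw [hm] at h1
        simp at h1
      rw [pow_zero] at hemp
      rw [pow_zero, hemp]; simp
    | succ n ih =>
      have hsplit : C ∩ Set.Iio (g ^ (n + 1)) =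
          (C ∩ Set.Iio (g ^ n)) ∪ (C ∩ Set.Ico (g ^ n) (g ^ (n + 1))) := by
        rw [← Set.inter_union_distrib_left, Set.Iio_union_Ico_eq_Iio]
        exact Nat.pow_le_pow_right (by omega) (by omega)
      have hdisj : Disjoint (C ∩ Set.Iio (g ^ n)) (C ∩ Set.Ico (g ^ n) (g ^ (n + 1))) := by
        rw [Set.disjoint_left]
        rintro m ⟨-, hm1⟩ ⟨-, hm2, -⟩
        exact absurd hm1 (by simpa using hm2)
      have hf1 : (C ∩ Set.Iio (g ^ n)).Finite :=
        (Set.finite_Iio _).subset Set.inter_subset_right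
      have hf2 : (C ∩ Set.Ico (g ^ n) (g ^ (n + 1))).Finite :=
        (Set.finite_Ico _ _).subset Set.inter_subset_right
      rw [hsplit, Set.ncard_union_eq hdisj hf1 hf2, ih, hblock n, Set.ncard_coe_finset,
        digitBlock_card g hg D hDsub hD0, Finset.sum_range_succ]
  -- digit congruence: every d ∈ D is ≡ d1 mod δ
  have hdig1 : ∀ d ∈ D, (d : ZMod δ) = (d1 : ZMod δ) := by
    intro d hd
    have hdvd : δ ∣ d - d1 :=
      dvd_trans (Nat.gcd_dvd_right a _) (Finset.gcd_dvd hd)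
    have hle : d1 ≤ d := D.min'_le d hd
    have hzero : ((d - d1 : ℕ) : ZMod δ) = 0 := (ZMod.natCast_eq_zero_iff _ _).mpr hdvd
    calc (d : ZMod δ) = ((d1 + (d - d1) : ℕ) : ZMod δ) := by rw [Nat.add_sub_cancel' hle]
    _ = (d1 : ZMod δ) := by push_cast [hzero]; ring
  -- residue of numbers with digits in D
  have hres : ∀ w : List ℕ, (∀ d ∈ w, d ∈ D) →
      Nat.ofDigits ((g : ZMod δ)) w =
        (d1 : ZMod δ) * ∑ i ∈ Finset.range w.length, (g : ZMod δ) ^ i := by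
    intro w
    induction w with
    | nil => simp [Nat.ofDigits]
    | cons d w ih =>
      intro hw
      have hd : d ∈ D := hw d List.mem_cons_self
      have hw' : ∀ x ∈ w, x ∈ D := fun x hx => hw x (List.mem_cons_of_mem d hx)
      have hcons : Nat.ofDigits ((g : ZMod δ)) (d :: w) =
          (d : ZMod δ) + (g : ZMod δ) * Nat.ofDigits ((g : ZMod δ)) w := rfl
      rw [hcons, ih hw', hdig1 d hd, List.length_cons, Finset.sum_range_succ']
      simp only [pow_zero, pow_succ']
      rw [← Finset.mul_sum]
      ring
  -- the key claim: every limit is 0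
  have key : ∀ b : ℕ, ∀ L : ℝ,
      Tendsto (fun N : ℕ =>
          ((C ∩ {n | n % a = b} ∩ Set.Iio N).ncard : ℝ) / ((C ∩ Set.Iio N).ncard))
        atTop (nhds L) → L = 0 := by
    intro b L ht
    set f : ℕ → ℝ := fun N =>
      ((C ∩ {n | n % a = b} ∩ Set.Iio N).ncard : ℝ) / ((C ∩ Set.Iio N).ncard) with hfdef
    -- frequently bad k
    have hgδ : Nat.Coprime g δ := Nat.Coprime.coprime_dvd_right hδa hgcd
    have hgunit : IsUnit ((g : ZMod δ)) := by
      have hu := (ZMod.unitOfCoprime g hgδ).isUnit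
      rwa [ZMod.coe_unitOfCoprime] at hu
    have freq_bad : ∃ᶠ k in atTop,
        (d1 : ZMod δ) * ∑ i ∈ Finset.range (k + 1), (g : ZMod δ) ^ i ≠ (b : ZMod δ) := by
      rw [Filter.frequently_atTop]
      intro K
      by_contra hcon
      push_neg at hcon
      have e1 := hcon K le_rfl
      have e2 := hcon (K + 1) (by omega)
      rw [Finset.sum_range_succ (n := K + 1), mul_add, e1] at e2
      have hzero : (d1 : ZMod δ) * (g : ZMod δ) ^ (K + 1) = 0 := by
        have := e2
        rwa [add_eq_left] at this
      rw [IsUnit.mul_left_eq_zero (hgunit.pow (K + 1))] at hzero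
      exact hd1 ((ZMod.natCast_eq_zero_iff _ _).mp hzero)
    -- at bad indices the class-b count does not grow
    have Aeq : ∀ k : ℕ,
        (d1 : ZMod δ) * ∑ i ∈ Finset.range (k + 1), (g : ZMod δ) ^ i ≠ (b : ZMod δ) →
        (C ∩ {n | n % a = b} ∩ Set.Iio (g ^ (k + 1))) =
          (C ∩ {n | n % a = b} ∩ Set.Iio (g ^ k)) := by
      intro k hbad
      ext m
      simp only [Set.mem_inter_iff, Set.mem_Iio, Set.mem_setOf_eq]
      constructor
      · rintro ⟨⟨hmC, hmb⟩, hm⟩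
        refine ⟨⟨hmC, hmb⟩, ?_⟩
        by_contra hge
        push_neg at hge
        have hm0 : m ≠ 0 := by
          have : 0 < g ^ k := Nat.pow_pos (by omega)
          omega
        have hlen : (Nat.digits g m).length = k + 1 := by
          rw [Nat.digits_len g m hg1 hm0, Nat.log_eq_of_pow_le_of_lt_pow hge hm]
        obtain ⟨-, hdigD⟩ := (hCc m).mp hmC
        have h1 : (m : ZMod δ) =
            (d1 : ZMod δ) * ∑ i ∈ Finset.range (k + 1), (g : ZMod δ) ^ i := by
          have hr := hres (Nat.digits g m) hdigD
          rw [hlen] at hr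
          rw [← Nat.ofDigits_digits g m, Nat.coe_ofDigits]
          exact hr
        have h2 : (m : ZMod δ) = (b : ZMod δ) := by
          have hma : a * (m / a) + b = m := by rw [← hmb]; exact Nat.div_add_mod m a
          have ha0 : ((a : ℕ) : ZMod δ) = 0 := (ZMod.natCast_eq_zero_iff _ _).mpr hδa
          rw [← hma]
          push_cast [ha0]
          ring
        exact hbad (h1 ▸ h2)
      · rintro ⟨h, hm⟩
        exact ⟨h, lt_of_lt_of_le hm (Nat.pow_le_pow_right (by omega) (by omega))⟩
    -- counting estimates
    have hTle : ∀ n : ℕ, (∑ j ∈ Finset.range n, t ^ (j + 1)) ≤ t ^ (n + 1) := by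
      intro n
      induction n with
      | zero => simp
      | succ n ih =>
        rw [Finset.sum_range_succ]
        calc (∑ j ∈ Finset.range n, t ^ (j + 1)) + t ^ (n + 1) ≤ t ^ (n + 1) + t ^ (n + 1) := by
              omega
        _ = 2 * t ^ (n + 1) := by ring
        _ ≤ t * t ^ (n + 1) := Nat.mul_le_mul_right _ hcard
        _ = t ^ (n + 2) := by ring
    have hT2 : ∀ n : ℕ, 2 * (∑ j ∈ Finset.range n, t ^ (j + 1)) ≤
        ∑ j ∈ Finset.range (n + 1), t ^ (j + 1) := by
      intro n
      rw [Finset.sum_range_succ]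
      have := hTle n
      omega
    have hT1 : ∀ n : ℕ, 1 ≤ n → 1 ≤ ∑ j ∈ Finset.range n, t ^ (j + 1) := by
      intro n hn
      have h0 : (0 : ℕ) ∈ Finset.range n := Finset.mem_range.mpr (by omega)
      have hs : t ^ (0 + 1) ≤ ∑ j ∈ Finset.range n, t ^ (j + 1) :=
        Finset.single_le_sum (f := fun j => t ^ (j + 1)) (fun i _ => Nat.zero_le _) h0
      have ht1 : 1 ≤ t ^ (0 + 1) := by
        have h1t : 1 ≤ t := by omega
        simpa using h1t
      omega
    -- the ratio inequality at bad indices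
    have hineq : ∀ k : ℕ, 1 ≤ k →
        (d1 : ZMod δ) * ∑ i ∈ Finset.range (k + 1), (g : ZMod δ) ^ i ≠ (b : ZMod δ) →
        f (g ^ (k + 1)) ≤ f (g ^ k) / 2 := by
      intro k hk hbad
      show ((C ∩ {n | n % a = b} ∩ Set.Iio (g ^ (k + 1))).ncard : ℝ) /
          ((C ∩ Set.Iio (g ^ (k + 1))).ncard : ℝ) ≤
          ((C ∩ {n | n % a = b} ∩ Set.Iio (g ^ k)).ncard : ℝ) /
          ((C ∩ Set.Iio (g ^ k)).ncard : ℝ) / 2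
      rw [Aeq k hbad, hcount k, hcount (k + 1), div_div]
      have hTpos : (0 : ℝ) < ((∑ j ∈ Finset.range k, t ^ (j + 1) : ℕ) : ℝ) * 2 := by
        have h1 := hT1 k hk
        have h2 : (0 : ℕ) < ∑ j ∈ Finset.range k, t ^ (j + 1) := by omega
        have h3 : (0 : ℝ) < ((∑ j ∈ Finset.range k, t ^ (j + 1) : ℕ) : ℝ) := by
          exact_mod_cast h2
        linarith
      have hTle2 : ((∑ j ∈ Finset.range k, t ^ (j + 1) : ℕ) : ℝ) * 2 ≤
          ((∑ j ∈ Finset.range (k + 1), t ^ (j + 1) : ℕ) : ℝ) := by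
        have h2 : ((2 * ∑ j ∈ Finset.range k, t ^ (j + 1) : ℕ) : ℝ) ≤
            ((∑ j ∈ Finset.range (k + 1), t ^ (j + 1) : ℕ) : ℝ) := Nat.cast_le.mpr (hT2 k)
        push_cast at h2 ⊢
        linarith
      exact div_le_div_of_nonneg_left (Nat.cast_nonneg _) hTpos hTle2
    -- pass to the limit
    have hpow : Tendsto (fun k : ℕ => g ^ k) atTop atTop :=
      tendsto_pow_atTop_atTop_of_one_lt hg1
    have h1 : Tendsto (fun k => f (g ^ k)) atTop (nhds L) := ht.comp hpow
    have h2 : Tendsto (fun k => f (g ^ (k + 1))) atTop (nhds L) :=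
      ht.comp (hpow.comp (tendsto_add_atTop_nat 1))
    have hv : Tendsto (fun k => f (g ^ k) / 2 - f (g ^ (k + 1))) atTop (nhds (L / 2 - L)) :=
      (h1.div_const 2).sub h2
    have hfreq2 : ∃ᶠ k in atTop,
        (fun k => f (g ^ k) / 2 - f (g ^ (k + 1))) k ∈ Set.Ici (0 : ℝ) := by
      refine (freq_bad.and_eventually (eventually_ge_atTop 1)).mono ?_
      rintro k ⟨hbad, hk1⟩
      exact sub_nonneg.mpr (hineq k hk1 hbad)
    have hmem := (isClosed_Ici (a := (0:ℝ))).mem_of_frequently_of_tendsto hfreq2 hv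
    rw [Set.mem_Ici] at hmem
    have hL0 : (0 : ℝ) ≤ L := by
      refine ge_of_tendsto' ht (fun N => ?_)
      positivity
    linarith
  -- assemble the two parts
  constructor
  · refine ⟨d1 % a, Nat.mod_lt _ (by omega), ⟨d1, ?_, rfl⟩, fun L hL htend => ?_⟩
    · rw [hC]
      refine ⟨[d1], by simp, ?_, Nat.ofDigits_singleton⟩
      intro d hd
      rw [List.mem_singleton] at hd
      rw [hd]
      exact hd1D
    · have := key (d1 % a) L htend
      linarith
  · intro b _ L htend
    exact key b L htend
end

section
/- Let g ≥ 4 and let D, D' be disjoint subsets of {0,…,g−1} with |D| = 2 and |D'| = 3, and set a := g. Let A := C_{g,D} ∪ C_{g,D'} be the set of integers all of whose base-g digits lie in D, or all of whose base-g digits lie in D'. Fix d₀ ∈ D. Then dim_M(A) = log 3 / log g, dim_M(A ∩ (aℕ + d₀)) = log 2 / log g, and in particular 0 < dim_M(A ∩ (aℕ + d₀)) < dim_M(A). -/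
open Filter Nat

lemma mem_digits_ofDigits_mem {g : ℕ} (hg : 2 ≤ g) :
    ∀ (w : List ℕ), (∀ d ∈ w, d < g) → ∀ x ∈ Nat.digits g (Nat.ofDigits g w), x ∈ w := by
  intro w
  induction w with
  | nil => simp
  | cons d w ih =>
    intro hlt x hx
    rw [Nat.ofDigits_cons] at hx
    rcases Nat.eq_zero_or_pos (d + g * Nat.ofDigits g w) with h0 | hpos
    · rw [h0] at hx; simp at hx
    · rw [Nat.digits_def' (by omega : 1 < g) hpos] at hx
      have hd : d < g := hlt d (by simp)
      have hmod : (d + g * Nat.ofDigits g w) % g = d := by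
        simp [Nat.add_mul_mod_self_left, Nat.mod_eq_of_lt hd]
      have hdiv : (d + g * Nat.ofDigits g w) / g = Nat.ofDigits g w := by
        rw [Nat.add_mul_div_left _ _ (by omega : 0 < g), Nat.div_eq_of_lt hd]; omega
      rw [hmod, hdiv] at hx
      rcases List.mem_cons.mp hx with h | h
      · simp [h]
      · exact List.mem_cons_of_mem _ (ih (fun y hy => hlt y (List.mem_cons_of_mem _ hy)) x h)

lemma map_indexOf_inj (l : List ℕ) :
    ∀ (L₁ L₂ : List ℕ), (∀ d ∈ L₁, d ∈ l) → (∀ d ∈ L₂, d ∈ l) →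
      L₁.map (fun d => l.idxOf d) = L₂.map (fun d => l.idxOf d) → L₁ = L₂ := by
  intro L₁
  induction L₁ with
  | nil => intro L₂ _ _ h; simpa using (List.map_eq_nil_iff.mp h.symm)
  | cons a L ih =>
    intro L₂ h1 h2 h
    cases L₂ with
    | nil => simp at h
    | cons b M =>
      simp only [List.map_cons, List.cons.injEq] at h
      have ha : a ∈ l := h1 a (by simp)
      have hb : b ∈ l := h2 b (by simp)
      have : a = b := by
        have ha' := List.idxOf_get (List.idxOf_lt_length_iff.mpr ha)
        have hb' := List.idxOf_get (List.idxOf_lt_length_iff.mpr hb)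
        rw [← ha', ← hb']
        congr 1
        exact Fin.ext h.1
      rw [this, ih M (fun d hd => h1 d (by simp [hd])) (fun d hd => h2 d (by simp [hd])) h.2]

lemma ncard_Iio_nat (n : ℕ) : (Set.Iio n).ncard = n := by
  rw [show (Set.Iio n) = ↑(Finset.range n) by ext x; simp, Set.ncard_coe_finset,
    Finset.card_range]

lemma upper_count (g : ℕ) (hg : 2 ≤ g) (E : Finset ℕ) (hE : E ⊆ Finset.range g)
    (hb : 2 ≤ E.card) (k : ℕ) :
    ({m : ℕ | ∃ w : List ℕ, w ≠ [] ∧ (∀ d ∈ w, d ∈ E) ∧ Nat.ofDigits g w = m}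
      ∩ Set.Iio (g ^ k)).ncard ≤ E.card ^ (k + 1) := by
  set b := E.card with hbdef
  set l := E.sort (· ≤ ·) with hl
  have hlen : l.length = b := Finset.length_sort _
  set e' : ℕ → ℕ := fun d => l.idxOf d with he'
  set ψ : ℕ → ℕ := fun m => Nat.ofDigits b ((Nat.digits g m).map e' ++ [1]) with hψ
  set S := {m : ℕ | ∃ w : List ℕ, w ≠ [] ∧ (∀ d ∈ w, d ∈ E) ∧ Nat.ofDigits g w = m}
    ∩ Set.Iio (g ^ k) with hS
  -- digits of members lie in E
  have hmemE : ∀ m ∈ S, ∀ d ∈ Nat.digits g m, d ∈ E := by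
    rintro m ⟨⟨w, _, hw, rfl⟩, _⟩ d hd
    exact hw d (mem_digits_ofDigits_mem hg w
      (fun x hx => Finset.mem_range.mp (hE (hw x hx))) d hd)
  have he'lt : ∀ d ∈ E, e' d < b := by
    intro d hd
    rw [← hlen]
    exact List.idxOf_lt_length_iff.mpr ((Finset.mem_sort _).mpr hd)
  -- digits of ψ m recover the list
  have hdig : ∀ m ∈ S, Nat.digits b (ψ m) = (Nat.digits g m).map e' ++ [1] := by
    intro m hm
    apply Nat.digits_ofDigits b (by omega)
    · intro x hx
      rcases List.mem_append.mp hx with h | h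
      · obtain ⟨d, hd, rfl⟩ := List.mem_map.mp h
        exact he'lt d (hmemE m hm d hd)
      · simp at h; omega
    · intro h
      rw [List.getLast_append_singleton]
      omega
  -- ψ is injective on S
  have hinj : Set.InjOn ψ S := by
    intro m hm m' hm' h
    have h2 : (Nat.digits g m).map e' ++ [1] = (Nat.digits g m').map e' ++ [1] := by
      rw [← hdig m hm, ← hdig m' hm', h]
    have h3 := List.append_left_injective [1] h2
    have h4 := map_indexOf_inj l (Nat.digits g m) (Nat.digits g m')
      (fun d hd => (Finset.mem_sort _).mpr (hmemE m hm d hd))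
      (fun d hd => (Finset.mem_sort _).mpr (hmemE m' hm' d hd)) h3
    calc m = Nat.ofDigits g (Nat.digits g m) := (Nat.ofDigits_digits g m).symm
      _ = Nat.ofDigits g (Nat.digits g m') := by rw [h4]
      _ = m' := Nat.ofDigits_digits g m'
  -- ψ maps into Iio (b ^ (k+1))
  have hmaps : ∀ m ∈ S, ψ m ∈ Set.Iio (b ^ (k + 1)) := by
    intro m hm
    have hlenle : (Nat.digits g m).length ≤ k := by
      rcases eq_or_ne m 0 with rfl | h
      · simp
      · rw [Nat.digits_len g m (by omega) h]
        have := Nat.log_lt_of_lt_pow h hm.2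
        omega
    have hlt : ψ m < b ^ ((Nat.digits g m).map e' ++ [1]).length := by
      apply Nat.ofDigits_lt_base_pow_length (by omega)
      intro x hx
      rcases List.mem_append.mp hx with h | h
      · obtain ⟨d, hd, rfl⟩ := List.mem_map.mp h
        exact he'lt d (hmemE m hm d hd)
      · simp at h; omega
    have : ((Nat.digits g m).map e' ++ [1]).length ≤ k + 1 := by
      simp [List.length_append, List.length_map]; omega
    exact Set.mem_Iio.mpr (lt_of_lt_of_le hlt (Nat.pow_le_pow_right (by omega) this))
  calc S.ncard ≤ (Set.Iio (b ^ (k + 1))).ncard :=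
        Set.ncard_le_ncard_of_injOn ψ hmaps hinj (Set.finite_Iio _)
    _ = b ^ (k + 1) := ncard_Iio_nat _

-- digits length bound
lemma digits_len_le_of_lt_pow {g : ℕ} (hg : 2 ≤ g) {m k : ℕ} (hm : m < g ^ k) :
    (Nat.digits g m).length ≤ k := by
  rcases eq_or_ne m 0 with rfl | h
  · simp
  · rw [Nat.digits_len g m (by omega) h]
    have := Nat.log_lt_of_lt_pow h hm
    omega

-- e construction from a Finset
lemma exists_enum (g : ℕ) (hg : 2 ≤ g) (E : Finset ℕ) (hE : E ⊆ Finset.range g) :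
    ∃ e : ℕ → ℕ, Function.Injective e ∧ (∀ i, i < E.card → e i ∈ E) ∧
      (∀ i, 0 < i → e i ≠ 0) ∧ (∀ i, i < E.card → e i < g) := by
  set l := E.sort (· ≤ ·) with hl
  have hlen : l.length = E.card := Finset.length_sort _
  have hsort : l.Pairwise (· < ·) := E.sortedLT_sort.pairwise
  have hmemE : ∀ (i : Fin l.length), l.get i ∈ E := fun i =>
    (Finset.mem_sort _).mp (l.get_mem i)
  have hltg : ∀ (i : Fin l.length), l.get i < g := fun i =>
    Finset.mem_range.mp (hE (hmemE i))
  have hmono : StrictMono l.get := hsort.sortedLT.strictMono_get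
  refine ⟨fun i => if h : i < l.length then l.get ⟨i, h⟩ else i + g, ?_, ?_, ?_, ?_⟩
  · have : StrictMono (fun i => if h : i < l.length then l.get ⟨i, h⟩ else i + g) := by
      intro i j hij
      dsimp only
      by_cases hi : i < l.length <;> by_cases hj : j < l.length
      · rw [dif_pos hi, dif_pos hj]; exact hmono (show (⟨i,hi⟩ : Fin _) < ⟨j,hj⟩ from hij)
      · rw [dif_pos hi, dif_neg hj]
        exact lt_of_lt_of_le (hltg ⟨i, hi⟩) (by omega)
      · omega
      · rw [dif_neg hi, dif_neg hj]; omega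
    exact this.injective
  · intro i hi
    dsimp only
    rw [dif_pos (by omega : i < l.length)]
    exact hmemE _
  · intro i hi
    dsimp only
    by_cases h : i < l.length
    · rw [dif_pos h]
      have := hmono (show (⟨0, by omega⟩ : Fin l.length) < ⟨i, h⟩ from hi)
      omega
    · rw [dif_neg h]; omega
  · intro i hi
    dsimp only
    rw [dif_pos (by omega : i < l.length)]
    exact hltg _

lemma ofDigits_map_injective {g b : ℕ} (hg : 2 ≤ g) (hb : 2 ≤ b)
    (e : ℕ → ℕ) (he : Function.Injective e)
    (helt : ∀ i, i < b → e i < g) (hene : ∀ i, 0 < i → e i ≠ 0) :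
    Function.Injective (fun j => Nat.ofDigits g ((Nat.digits b j).map e)) := by
  have key : ∀ j, Nat.digits g (Nat.ofDigits g ((Nat.digits b j).map e))
      = (Nat.digits b j).map e := by
    intro j
    rcases Nat.eq_zero_or_pos j with rfl | hj
    · simp
    · apply Nat.digits_ofDigits g (by omega)
      · intro l hl
        obtain ⟨i, hi, rfl⟩ := List.mem_map.mp hl
        exact helt i (Nat.digits_lt_base (by omega) hi)
      · intro h
        have hnil : Nat.digits b j ≠ [] := Nat.digits_ne_nil_iff_ne_zero.mpr (by omega)
        rw [List.getLast_map h]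
        apply hene
        exact Nat.pos_of_ne_zero (Nat.getLast_digit_ne_zero b (by omega))
  intro j j' h
  simp only at h
  have := congrArg (Nat.digits g) h
  rw [key, key] at this
  have := List.map_injective_iff.mpr he this
  calc j = Nat.ofDigits b (Nat.digits b j) := (Nat.ofDigits_digits b j).symm
    _ = Nat.ofDigits b (Nat.digits b j') := by rw [this]
    _ = j' := Nat.ofDigits_digits b j'

lemma lower_count (g b : ℕ) (hg : 2 ≤ g) (hb : 2 ≤ b) (E : Finset ℕ)
    (e : ℕ → ℕ) (he : Function.Injective e) (heE : ∀ i, i < b → e i ∈ E)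
    (hene : ∀ i, 0 < i → e i ≠ 0) (helt : ∀ i, i < b → e i < g)
    (dd : ℕ) (hddE : dd ∈ E) (hdd : dd < g) (n : ℕ) (T : Set ℕ) (hTfin : T.Finite)
    (hT : ∀ m, (∃ w : List ℕ, w ≠ [] ∧ (∀ d ∈ w, d ∈ E) ∧ Nat.ofDigits g w = m) →
       m % g = dd → m < g ^ (n + 1) → m ∈ T) :
    b ^ n ≤ T.ncard := by
  set X : ℕ → ℕ := fun j => Nat.ofDigits g ((Nat.digits b j).map e) with hX
  set F : ℕ → ℕ := fun j => dd + g * X j with hF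
  have hXinj : Function.Injective X := ofDigits_map_injective hg hb e he helt hene
  have hFinj : Function.Injective F := by
    intro j j' h
    simp only [hF] at h
    have h' : g * X j = g * X j' := Nat.add_left_cancel h
    exact hXinj (Nat.eq_of_mul_eq_mul_left (by omega) h')
  have hFT : ∀ j ∈ Finset.range (b ^ n), F j ∈ T := by
    intro j hj
    have hjlt := Finset.mem_range.mp hj
    have hlen : (Nat.digits b j).length ≤ n := by
      rcases eq_or_ne j 0 with rfl | h
      · simp
      · rw [Nat.digits_len b j (by omega) h]
        have := Nat.log_lt_of_lt_pow h hjlt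
        omega
    have hXlt : X j < g ^ n := by
      have h1 : X j < g ^ ((Nat.digits b j).map e).length := by
        apply Nat.ofDigits_lt_base_pow_length (by omega)
        intro x hx
        obtain ⟨i, hi, rfl⟩ := List.mem_map.mp hx
        exact helt i (Nat.digits_lt_base (by omega) hi)
      refine lt_of_lt_of_le h1 (Nat.pow_le_pow_right (by omega) ?_)
      simpa using hlen
    apply hT
    · refine ⟨dd :: (Nat.digits b j).map e, by simp, ?_, ?_⟩
      · intro d hd
        rcases List.mem_cons.mp hd with rfl | hd
        · exact hddE
        · obtain ⟨i, hi, rfl⟩ := List.mem_map.mp hd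
          exact heE i (Nat.digits_lt_base (by omega) hi)
      · rw [Nat.ofDigits_cons]
    · simp [hF, Nat.add_mul_mod_self_left, Nat.mod_eq_of_lt hdd]
    · have : g * X j + g ≤ g * g ^ n := by
        have : X j + 1 ≤ g ^ n := hXlt
        calc g * X j + g = g * (X j + 1) := by ring
          _ ≤ g * g ^ n := Nat.mul_le_mul_left g this
      have hpow : g ^ (n + 1) = g * g ^ n := by ring
      simp only [hF]
      omega
  calc b ^ n = ((Finset.range (b ^ n)).image F).card := by
        rw [Finset.card_image_of_injective _ hFinj, Finset.card_range]
    _ = (↑((Finset.range (b ^ n)).image F) : Set ℕ).ncard := (Set.ncard_coe_finset _).symm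
    _ ≤ T.ncard := by
        apply Set.ncard_le_ncard _ hTfin
        intro x hx
        simp only [Finset.coe_image, Set.mem_image, Finset.mem_coe] at hx
        obtain ⟨j, hj, rfl⟩ := hx
        exact hFT j hj

lemma tendsto_log_ratio (g b C : ℕ) (hg : 2 ≤ g) (hb : 2 ≤ b) (hC : 1 ≤ C)
    (f : ℕ → ℕ) (hmono : Monotone f)
    (hlow : ∀ k, 1 ≤ k → b ^ (k - 1) ≤ f (g ^ k))
    (hup : ∀ k, f (g ^ k) ≤ C * b ^ k) :
    Tendsto (fun N : ℕ => Real.log (f N) / Real.log N) atTop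
      (nhds (Real.log b / Real.log g)) := by
  have hlg : (0:ℝ) < Real.log g := Real.log_pos (by exact_mod_cast hg)
  have hlb : (0:ℝ) < Real.log b := Real.log_pos (by exact_mod_cast hb)
  have hlC : (0:ℝ) ≤ Real.log C := Real.log_natCast_nonneg C
  set c := Real.log b / Real.log g with hc
  set L : ℕ → ℝ := fun k => (((k:ℝ) - 1) / ((k:ℝ) + 1)) * c with hL
  set U : ℕ → ℝ := fun k => (((k:ℝ) + 1) / (k:ℝ)) * c + (Real.log C / Real.log g) * (1 / (k:ℝ))
    with hU
  -- limits of L and U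
  have hnat : Tendsto (fun k : ℕ => (k:ℝ)) atTop atTop := tendsto_natCast_atTop_atTop
  have h1 : Tendsto (fun k : ℕ => ((k:ℝ) - 1) / ((k:ℝ) + 1)) atTop (nhds 1) := by
    have heq : ∀ k : ℕ, ((k:ℝ) - 1) / ((k:ℝ) + 1) = 1 - 2 / ((k:ℝ) + 1) := by
      intro k
      have : ((k:ℝ) + 1) ≠ 0 := by positivity
      field_simp
      ring
    simp only [heq]
    have h2 : Tendsto (fun k : ℕ => 2 / ((k:ℝ) + 1)) atTop (nhds 0) :=
      Tendsto.div_atTop tendsto_const_nhds (tendsto_atTop_add_const_right _ 1 hnat)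
    simpa using tendsto_const_nhds.sub h2
  have h2 : Tendsto (fun k : ℕ => ((k:ℝ) + 1) / (k:ℝ)) atTop (nhds 1) := by
    have heq : ∀ᶠ k : ℕ in atTop, ((k:ℝ) + 1) / (k:ℝ) = 1 + 1 / (k:ℝ) := by
      filter_upwards [eventually_ge_atTop 1] with k hk
      have : (k:ℝ) ≠ 0 := by positivity
      field_simp
    apply Tendsto.congr' (heq.mono fun k hk => hk.symm)
    have h3 : Tendsto (fun k : ℕ => 1 / (k:ℝ)) atTop (nhds 0) :=
      Tendsto.div_atTop tendsto_const_nhds hnat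
    simpa using tendsto_const_nhds.add h3
  have hLlim : Tendsto L atTop (nhds c) := by
    have := h1.mul (tendsto_const_nhds (x := c))
    simpa using this
  have hUlim : Tendsto U atTop (nhds c) := by
    have h3 : Tendsto (fun k : ℕ => 1 / (k:ℝ)) atTop (nhds 0) :=
      Tendsto.div_atTop tendsto_const_nhds hnat
    have := (h2.mul (tendsto_const_nhds (x := c))).add
      ((tendsto_const_nhds (x := Real.log (C:ℕ) / Real.log (g:ℕ))).mul h3)
    simp only [one_mul, mul_zero, add_zero] at this
    convert this using 2 <;> simp [hU, one_div]
  -- Nat.log tendsto atTop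
  have hlogT : Tendsto (fun N : ℕ => Nat.log g N) atTop atTop := by
    apply tendsto_atTop_atTop_of_monotone Nat.log_monotone
    intro k
    exact ⟨g ^ k, (Nat.log_pow (by omega) k).ge⟩
  -- eventual bounds
  have hbound : ∀ᶠ N : ℕ in atTop,
      L (Nat.log g N) ≤ Real.log (f N) / Real.log N ∧
      Real.log (f N) / Real.log N ≤ U (Nat.log g N) := by
    filter_upwards [eventually_ge_atTop g] with N hN
    set k := Nat.log g N with hk
    have hk1 : 1 ≤ k := Nat.log_pos (by omega) hN
    have hN0 : N ≠ 0 := by omega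
    have hN1 : g ^ k ≤ N := Nat.pow_log_le_self g hN0
    have hN2 : N < g ^ (k + 1) := Nat.lt_pow_succ_log_self (by omega) N
    have hf1 : b ^ (k - 1) ≤ f N := le_trans (hlow k hk1) (hmono hN1)
    have hf2 : f N ≤ C * b ^ (k + 1) := le_trans (hmono hN2.le) (hup (k + 1))
    have hfpos : (1:ℕ) ≤ f N := le_trans (Nat.one_le_pow _ _ (by omega)) hf1
    -- real log bounds
    have hlogf1 : ((k:ℝ) - 1) * Real.log b ≤ Real.log (f N) := by
      have := Real.log_le_log (by positivity) (show ((b:ℝ) ^ (k-1) : ℝ) ≤ (f N : ℝ) by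
        exact_mod_cast hf1)
      rw [Real.log_pow] at this
      have hcast : ((k - 1 : ℕ) : ℝ) = (k:ℝ) - 1 := by
        have : 1 ≤ k := hk1
        push_cast [this]
        ring
      rw [hcast] at this
      exact this
    have hlogf2 : Real.log (f N) ≤ Real.log C + ((k:ℝ) + 1) * Real.log b := by
      have := Real.log_le_log (by positivity) (show ((f N : ℕ) : ℝ) ≤ ((C * b ^ (k+1) : ℕ) : ℝ)
        by exact_mod_cast hf2)
      rw [Nat.cast_mul, Real.log_mul (by positivity) (by positivity), Nat.cast_pow,
        Real.log_pow] at this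
      push_cast at this ⊢
      linarith
    have hlogN1 : (k:ℝ) * Real.log g ≤ Real.log N := by
      have := Real.log_le_log (by positivity) (show ((g:ℝ) ^ k : ℝ) ≤ (N : ℝ) by
        exact_mod_cast hN1)
      rwa [Real.log_pow] at this
    have hlogN2 : Real.log N ≤ ((k:ℝ) + 1) * Real.log g := by
      have := Real.log_le_log (by positivity) (show ((N:ℕ):ℝ) ≤ ((g ^ (k+1) : ℕ) : ℝ) by
        exact_mod_cast hN2.le)
      rw [Nat.cast_pow, Real.log_pow] at this
      push_cast at this ⊢
      linarith
    have hlogNpos : (0:ℝ) < Real.log N :=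
      lt_of_lt_of_le (by positivity) hlogN1
    have hlogfpos : (0:ℝ) ≤ Real.log (f N) := by
      have : ((k:ℝ) - 1) * Real.log b ≥ 0 := by
        have : (1:ℝ) ≤ (k:ℝ) := by exact_mod_cast hk1
        nlinarith
      linarith
    constructor
    · have : L k = (((k:ℝ) - 1) * Real.log b) / (((k:ℝ) + 1) * Real.log g) := by
        rw [hL, hc]; dsimp only; rw [_root_.div_mul_div_comm]
      rw [this]
      apply div_le_div₀ hlogfpos hlogf1 (by positivity) hlogN2
    · have : U k = (Real.log C + ((k:ℝ) + 1) * Real.log b) / ((k:ℝ) * Real.log g) := by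
        rw [hU, hc]
        have hk0 : (k:ℝ) ≠ 0 := by
          have : (1:ℝ) ≤ (k:ℝ) := by exact_mod_cast hk1
          linarith
        field_simp
        ring
      rw [this]
      apply div_le_div₀ (by positivity) hlogf2 (by positivity) hlogN1
  apply tendsto_of_tendsto_of_tendsto_of_le_of_le' (hLlim.comp hlogT) (hUlim.comp hlogT)
  · filter_upwards [hbound] with N h using h.1
  · filter_upwards [hbound] with N h using h.2

/-- Counterexample: for `A = C_{g,D} ∪ C_{g,D'}` with `|D| = 2`, `|D'| = 3` disjoint
and the arithmetic progression `gℕ + d₀` with `d₀ ∈ D`, one has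
`dim_M(A) = log 3 / log g` while `dim_M(A ∩ (gℕ + d₀)) = log 2 / log g`, which is
strictly between `0` and `dim_M(A)`. -/
theorem transversality_counterexample (g : ℕ) (hg : 4 ≤ g)
    (D D' : Finset ℕ) (hDsub : D ⊆ Finset.range g) (hD'sub : D' ⊆ Finset.range g)
    (hdisj : Disjoint D D') (hcardD : D.card = 2) (hcardD' : D'.card = 3)
    (d₀ : ℕ) (hd₀ : d₀ ∈ D)
    (A : Set ℕ)
    (hA : A = {m : ℕ | ∃ w : List ℕ, w ≠ [] ∧
      ((∀ d ∈ w, d ∈ D) ∨ (∀ d ∈ w, d ∈ D')) ∧ Nat.ofDigits g w = m}) :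
    Tendsto (fun N : ℕ => Real.log ((A ∩ Set.Iio N).ncard) / Real.log N) atTop
      (nhds (Real.log 3 / Real.log g)) ∧
    Tendsto (fun N : ℕ =>
        Real.log ((A ∩ {n | n % g = d₀} ∩ Set.Iio N).ncard) / Real.log N) atTop
      (nhds (Real.log 2 / Real.log g)) ∧
    0 < Real.log 2 / Real.log g ∧
    Real.log 2 / Real.log g < Real.log 3 / Real.log g := by
  have hg2 : 2 ≤ g := by omega
  set SD := {m : ℕ | ∃ w : List ℕ, w ≠ [] ∧ (∀ d ∈ w, d ∈ D) ∧ Nat.ofDigits g w = m}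
    with hSD
  set SD' := {m : ℕ | ∃ w : List ℕ, w ≠ [] ∧ (∀ d ∈ w, d ∈ D') ∧ Nat.ofDigits g w = m}
    with hSD'
  have hAeq : A = SD ∪ SD' := by
    rw [hA]
    ext m
    constructor
    · rintro ⟨w, h1, h2 | h2, h3⟩
      · exact Or.inl ⟨w, h1, h2, h3⟩
      · exact Or.inr ⟨w, h1, h2, h3⟩
    · rintro (⟨w, h1, h2, h3⟩ | ⟨w, h1, h2, h3⟩)
      · exact ⟨w, h1, Or.inl h2, h3⟩
      · exact ⟨w, h1, Or.inr h2, h3⟩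
  obtain ⟨e2, he2inj, he2E, he2ne, he2lt⟩ := exists_enum g hg2 D hDsub
  obtain ⟨e3, he3inj, he3E, he3ne, he3lt⟩ := exists_enum g hg2 D' hD'sub
  rw [hcardD] at he2E he2lt
  rw [hcardD'] at he3E he3lt
  obtain ⟨dd', hdd'⟩ := Finset.card_pos.mp (show 0 < D'.card by omega)
  have hdd'g : dd' < g := Finset.mem_range.mp (hD'sub hdd')
  have hd₀g : d₀ < g := Finset.mem_range.mp (hDsub hd₀)
  -- the two counting functions
  set f₁ : ℕ → ℕ := fun N => (A ∩ Set.Iio N).ncard with hf₁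
  set f₂ : ℕ → ℕ := fun N => (A ∩ {n | n % g = d₀} ∩ Set.Iio N).ncard with hf₂
  have hmono₁ : Monotone f₁ := by
    intro N M h
    exact Set.ncard_le_ncard (Set.inter_subset_inter_right _ (Set.Iio_subset_Iio h))
      ((Set.finite_Iio M).inter_of_right _)
  have hmono₂ : Monotone f₂ := by
    intro N M h
    exact Set.ncard_le_ncard (Set.inter_subset_inter_right _ (Set.Iio_subset_Iio h))
      ((Set.finite_Iio M).inter_of_right _)
  -- lower bound for f₁
  have hlow₁ : ∀ k, 1 ≤ k → 3 ^ (k - 1) ≤ f₁ (g ^ k) := by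
    intro k hk
    have hk' : k - 1 + 1 = k := by omega
    apply lower_count g 3 hg2 (by norm_num) D' e3 he3inj he3E he3ne he3lt dd' hdd' hdd'g
      (k - 1) _ ((Set.finite_Iio (g ^ k)).inter_of_right _)
    intro m hw _ hlt
    rw [hk'] at hlt
    exact ⟨hAeq ▸ Or.inr hw, hlt⟩
  -- upper bound for f₁
  have hup₁ : ∀ k, f₁ (g ^ k) ≤ 6 * 3 ^ k := by
    intro k
    have hsplit : A ∩ Set.Iio (g ^ k) = (SD ∩ Set.Iio (g ^ k)) ∪ (SD' ∩ Set.Iio (g ^ k)) := by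
      rw [hAeq, Set.union_inter_distrib_right]
    have h1 := upper_count g hg2 D hDsub (by omega) k
    have h2 := upper_count g hg2 D' hD'sub (by omega) k
    rw [hcardD] at h1
    rw [hcardD'] at h2
    calc f₁ (g ^ k) ≤ (SD ∩ Set.Iio (g ^ k)).ncard + (SD' ∩ Set.Iio (g ^ k)).ncard := by
          rw [hf₁]; dsimp only; rw [hsplit]; exact Set.ncard_union_le _ _
      _ ≤ 2 ^ (k + 1) + 3 ^ (k + 1) := Nat.add_le_add h1 h2
      _ ≤ 6 * 3 ^ k := by
          have : 2 ^ k ≤ 3 ^ k := Nat.pow_le_pow_left (by norm_num) k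
          rw [pow_succ, pow_succ]
          omega
  -- lower bound for f₂
  have hlow₂ : ∀ k, 1 ≤ k → 2 ^ (k - 1) ≤ f₂ (g ^ k) := by
    intro k hk
    have hk' : k - 1 + 1 = k := by omega
    apply lower_count g 2 hg2 (le_refl 2) D e2 he2inj he2E he2ne he2lt d₀ hd₀ hd₀g
      (k - 1) _ (((Set.finite_Iio (g ^ k)).inter_of_right _))
    intro m hw hmod hlt
    rw [hk'] at hlt
    exact ⟨⟨hAeq ▸ Or.inl hw, hmod⟩, hlt⟩
  -- upper bound for f₂
  have hup₂ : ∀ k, f₂ (g ^ k) ≤ 2 * 2 ^ k := by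
    intro k
    have hsub : A ∩ {n | n % g = d₀} ∩ Set.Iio (g ^ k) ⊆ SD ∩ Set.Iio (g ^ k) := by
      rintro m ⟨⟨hmA, hmod⟩, hlt⟩
      refine ⟨?_, hlt⟩
      rw [hAeq] at hmA
      rcases hmA with h | h
      · exact h
      · -- m ∈ SD' with m % g = d₀ forces m = 0 and d₀ = 0
        rcases Nat.eq_zero_or_pos m with rfl | hm
        · have hd0 : d₀ = 0 := by simpa using hmod.symm
          exact ⟨[0], by simp, by simp [hd0 ▸ hd₀], by simp⟩
        · exfalso
          obtain ⟨w, hw1, hw2, hw3⟩ := h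
          have hdm : ∀ d ∈ Nat.digits g m, d ∈ D' := by
            intro d hd
            rw [← hw3] at hd
            exact hw2 d (mem_digits_ofDigits_mem hg2 w
              (fun x hx => Finset.mem_range.mp (hD'sub (hw2 x hx))) d hd)
          have hdig : Nat.digits g m = m % g :: Nat.digits g (m / g) :=
            Nat.digits_def' (by omega) hm
          have : m % g ∈ D' := hdm _ (by rw [hdig]; simp)
          rw [hmod] at this
          exact Finset.disjoint_left.mp hdisj hd₀ this
    have h1 := upper_count g hg2 D hDsub (by omega) k
    rw [hcardD] at h1
    calc f₂ (g ^ k) ≤ (SD ∩ Set.Iio (g ^ k)).ncard :=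
          Set.ncard_le_ncard hsub ((Set.finite_Iio (g ^ k)).inter_of_right _)
      _ ≤ 2 ^ (k + 1) := h1
      _ = 2 * 2 ^ k := by rw [pow_succ]; ring
  have hT₁ := tendsto_log_ratio g 3 6 hg2 (by norm_num) (by norm_num) f₁ hmono₁ hlow₁ hup₁
  have hT₂ := tendsto_log_ratio g 2 2 hg2 (le_refl 2) (by norm_num) f₂ hmono₂ hlow₂ hup₂
  have hlg : (0:ℝ) < Real.log g := Real.log_pos (by exact_mod_cast by omega : (1:ℝ) < g)
  refine ⟨?_, ?_, ?_, ?_⟩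
  · have : ((3:ℕ):ℝ) = (3:ℝ) := by norm_num
    rw [← this]
    exact hT₁
  · have : ((2:ℕ):ℝ) = (2:ℝ) := by norm_num
    rw [← this]
    exact hT₂
  · exact div_pos (Real.log_pos (by norm_num)) hlg
  · exact (div_lt_div_iff_of_pos_right hlg).mpr (Real.log_lt_log (by norm_num) (by norm_num))
end

section
/- Let g ≥ 2 and a ≥ 1. Suppose there exists n ≥ 1 with n ≡ 0 (mod a) and S_g(n) ≡ 1 (mod a'). Then for every pair (b, b') ∈ Z_a × Z_{a'} and every i ≥ a − 1, there exists a word w over the full digit set {0,…,g−1} whose length is a multiple of p (where p satisfies g^{i+p} ≡ g^i mod a for i ≥ a−1), such that g^i·(w)_g ≡ b (mod a) holds whenever b lies in the subgroup ⟨g^i⟩ of Z_a generated by g^i mod a, and S_g(w) ≡ b' (mod a'); conversely no word of length a multiple of p satisfies g^i(w)_g ≡ b (mod a) if b ∉ ⟨g^i⟩ + 0, i.e., if gcd(g^i, a) does not divide b. -/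
private lemma ofDigits_replicate_zero (g k : ℕ) :
    Nat.ofDigits g (List.replicate k 0) = 0 := by
  induction k with
  | zero => simp
  | succ k ih => simp [List.replicate_succ, Nat.ofDigits_cons, ih]

private lemma length_join_replicate {α : Type*} (k : ℕ) (B : List α) :
    ((List.replicate k B).flatten).length = k * B.length := by
  induction k with
  | zero => simp
  | succ k ih =>
    rw [List.replicate_succ, List.flatten_cons, List.length_append, ih, Nat.succ_mul]
    omega

private lemma sum_join_replicate (k : ℕ) (B : List ℕ) :
    ((List.replicate k B).flatten).sum = k * B.sum := by
  induction k with
  | zero => simp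
  | succ k ih =>
    rw [List.replicate_succ, List.flatten_cons, List.sum_append, ih, Nat.succ_mul]
    omega

private lemma dvd_ofDigits_join_replicate (a g k : ℕ) (B : List ℕ)
    (h : a ∣ Nat.ofDigits g B) :
    a ∣ Nat.ofDigits g ((List.replicate k B).flatten) := by
  induction k with
  | zero => simp [Nat.ofDigits]
  | succ k ih =>
    rw [List.replicate_succ, List.flatten_cons, Nat.ofDigits_append]
    exact Nat.dvd_add h (Dvd.dvd.mul_left ih _)

/-- Over the full digit alphabet `{0,…,g-1}`: if some `n ≥ 1` satisfies
`n ≡ 0 (mod a)` and `S_g(n) ≡ 1 (mod a')`, and `p ≥ 1` satisfies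
`g^(i+p) ≡ g^i (mod a)` for all `i ≥ a-1`, then for every pair `(b,b')` and every
`i ≥ a-1`: if `b` lies in the subgroup of `Z_a` generated by `g^i`
(i.e. `gcd(g^i, a) ∣ b`), there is a word `w` of length a positive multiple of `p`
with `g^i·(w)_g ≡ b (mod a)` and `S_g(w) ≡ b' (mod a')`; and conversely, if
`gcd(g^i, a)` does not divide `b`, no word of length a multiple of `p` satisfies
`g^i·(w)_g ≡ b (mod a)`. -/
theorem full_shift_reachable_classes (g a a' p : ℕ) (hg : 2 ≤ g) (ha : 1 ≤ a)
    (ha' : 1 ≤ a') (hp : 1 ≤ p)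
    (hper : ∀ i : ℕ, a - 1 ≤ i → g ^ (i + p) ≡ g ^ i [MOD a])
    (hn : ∃ n : ℕ, 1 ≤ n ∧ n % a = 0 ∧ (Nat.digits g n).sum % a' = 1) :
    ∀ b < a, ∀ b' < a', ∀ i : ℕ, a - 1 ≤ i →
      (Nat.gcd (g ^ i) a ∣ b →
        ∃ w : List ℕ, (∀ d ∈ w, d < g) ∧ w ≠ [] ∧ p ∣ w.length ∧
          g ^ i * Nat.ofDigits g w ≡ b [MOD a] ∧
          w.sum ≡ b' [MOD a']) ∧
      (¬ Nat.gcd (g ^ i) a ∣ b →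
        ∀ w : List ℕ, (∀ d ∈ w, d < g) → p ∣ w.length →
          ¬ (g ^ i * Nat.ofDigits g w ≡ b [MOD a])) := by
  obtain ⟨n, hn1, hna, hns⟩ := hn
  have ha'1 : 1 < a' := by
    have := Nat.mod_lt (Nat.digits g n).sum (show 0 < a' by omega)
    omega
  intro b hb b' hb' i hi
  constructor
  · intro hdvd
    obtain ⟨t, ht⟩ := hdvd
    have ha0 : ((a : ℤ)) ≠ 0 := Int.natCast_ne_zero.mpr (by omega)
    set x : ℤ := Nat.gcdA (g ^ i) a * t with hxdef
    set v : ℕ := (x % (a : ℤ)).toNat with hvdef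
    have hvcast : (v : ℤ) = x % (a : ℤ) := Int.toNat_of_nonneg (Int.emod_nonneg x ha0)
    have h1 : ((g : ℤ)) ^ i * x ≡ (b : ℤ) [ZMOD (a : ℤ)] := by
      have hbez := Nat.gcd_eq_gcd_ab (g ^ i) a
      have hb' : (b : ℤ) = (Nat.gcd (g ^ i) a : ℤ) * t := by exact_mod_cast ht
      rw [Int.modEq_iff_dvd]
      refine ⟨Nat.gcdB (g ^ i) a * t, ?_⟩
      rw [hb', hbez, hxdef]
      push_cast
      ring
    have hgv : ((g : ℤ)) ^ i * (v : ℤ) ≡ (b : ℤ) [ZMOD (a : ℤ)] := by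
      calc ((g : ℤ)) ^ i * (v : ℤ) = (g : ℤ) ^ i * (x % (a : ℤ)) := by rw [hvcast]
        _ ≡ (g : ℤ) ^ i * x [ZMOD (a : ℤ)] :=
            Int.ModEq.mul_left _ (Int.emod_emod_of_dvd x dvd_rfl)
        _ ≡ (b : ℤ) [ZMOD (a : ℤ)] := h1
    have hgvnat : g ^ i * v ≡ b [MOD a] := by
      rw [Nat.modEq_iff_dvd]
      have hd := hgv.dvd
      push_cast
      exact_mod_cast hd
    set Dv := Nat.digits g v with hDv
    set Dn := Nat.digits g n with hDn
    set P : List ℕ := Dv ++ List.replicate ((p - 1) * Dv.length) 0 with hP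
    set B : List ℕ := Dn ++ List.replicate ((p - 1) * Dn.length) 0 with hB
    set s := Dv.sum with hs
    set k := b' + a' - s % a' with hk
    have hk1 : 1 ≤ k := by
      have := Nat.mod_lt s (show 0 < a' by omega)
      omega
    have hDn0 : Dn ≠ [] := Nat.digits_ne_nil_iff_ne_zero.mpr (by omega)
    have hDn0' : 1 ≤ Dn.length := List.length_pos_iff.mpr hDn0
    have hPlen : P.length = p * Dv.length := by
      have h1 : Dv.length ≤ p * Dv.length := Nat.le_mul_of_pos_left Dv.length (by omega)
      rw [hP, List.length_append, List.length_replicate, Nat.sub_one_mul]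
      omega
    have hBlen : B.length = p * Dn.length := by
      have h1 : Dn.length ≤ p * Dn.length := Nat.le_mul_of_pos_left Dn.length (by omega)
      rw [hB, List.length_append, List.length_replicate, Nat.sub_one_mul]
      omega
    refine ⟨P ++ (List.replicate k B).flatten, ?_, ?_, ?_, ?_, ?_⟩
    · intro d hd
      rcases List.mem_append.mp hd with h | h
      · rcases List.mem_append.mp h with h | h
        · exact Nat.digits_lt_base hg h
        · rw [List.eq_of_mem_replicate h]; omega
      · obtain ⟨l, hl, hdl⟩ := List.mem_flatten.mp h
        rw [List.eq_of_mem_replicate hl] at hdl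
        rcases List.mem_append.mp hdl with h | h
        · exact Nat.digits_lt_base hg h
        · rw [List.eq_of_mem_replicate h]; omega
    · rw [← List.length_pos_iff, List.length_append, length_join_replicate]
      have : 1 ≤ k * B.length := Nat.one_le_iff_ne_zero.mpr (by
        have : 1 ≤ B.length := by rw [hBlen]; exact le_trans hDn0' (Nat.le_mul_of_pos_left _ (by omega))
        positivity)
      omega
    · rw [List.length_append, length_join_replicate, hPlen, hBlen]
      exact ⟨Dv.length + k * Dn.length, by ring⟩
    · have hPval : Nat.ofDigits g P = v := by
        rw [hP, Nat.ofDigits_append, ofDigits_replicate_zero, Nat.ofDigits_digits]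
        simp
      have hBval : a ∣ Nat.ofDigits g B := by
        rw [hB, Nat.ofDigits_append, ofDigits_replicate_zero, Nat.ofDigits_digits]
        simpa using Nat.dvd_of_mod_eq_zero hna
      obtain ⟨m, hm⟩ := dvd_ofDigits_join_replicate a g k B hBval
      have hw : Nat.ofDigits g (P ++ (List.replicate k B).flatten)
          = v + g ^ P.length * (a * m) := by
        rw [Nat.ofDigits_append, hPval, hm]
      have hwv : Nat.ofDigits g (P ++ (List.replicate k B).flatten) ≡ v [MOD a] := by
        rw [hw]
        conv_rhs => rw [← Nat.add_zero v]
        exact Nat.ModEq.add_left v ((Nat.modEq_zero_iff_dvd).mpr ⟨g ^ P.length * m, by ring⟩)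
      exact (hwv.mul_left (g ^ i)).trans hgvnat
    · have hsum : (P ++ (List.replicate k B).flatten).sum = s + k * Dn.sum := by
        rw [List.sum_append, sum_join_replicate, hP, hB]
        simp [List.sum_append, List.sum_replicate]
        exact hs.symm
      rw [hsum]
      have hS1 : Dn.sum ≡ 1 [MOD a'] := by
        show Dn.sum % a' = 1 % a'
        rw [Nat.mod_eq_of_lt ha'1]
        exact hns
      have h2 : s + k * Dn.sum ≡ s + k * 1 [MOD a'] :=
        Nat.ModEq.add_left s (Nat.ModEq.mul_left k hS1)
      refine h2.trans ?_
      rw [mul_one]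
      have h3 : s + k = b' + (a' + a' * (s / a')) := by
        have hdm := Nat.div_add_mod s a'
        have hlt := Nat.mod_lt s (show 0 < a' by omega)
        omega
      rw [h3]
      conv_rhs => rw [← Nat.add_zero b']
      exact Nat.ModEq.add_left b' ((Nat.modEq_zero_iff_dvd).mpr ⟨1 + s / a', by ring⟩)
  · intro hndvd w _ _ hmod
    apply hndvd
    have h1 : ((a : ℤ)) ∣ (b : ℤ) - ((g ^ i * Nat.ofDigits g w : ℕ) : ℤ) :=
      Nat.modEq_iff_dvd.mp hmod
    have h2 : (Nat.gcd (g ^ i) a : ℤ) ∣ (a : ℤ) :=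
      Int.natCast_dvd_natCast.mpr (Nat.gcd_dvd_right _ _)
    have h3 : (Nat.gcd (g ^ i) a : ℤ) ∣ ((g ^ i * Nat.ofDigits g w : ℕ) : ℤ) :=
      Int.natCast_dvd_natCast.mpr (Dvd.dvd.mul_right (Nat.gcd_dvd_left _ _) _)
    have h4 : (Nat.gcd (g ^ i) a : ℤ) ∣ (b : ℤ) := by
      have := dvd_add (h2.trans h1) h3
      simpa using this
    exact_mod_cast h4
end

section
/- Let S ⊆ ℕ and let X_S ⊆ {0,1}^ℕ be the S-gap subshift (sequences in which the number of 0's between consecutive 1's always lies in S). For n ≥ 1 let s₁ < s₂ < ⋯ enumerate S and S_n := {s₁,…,s_n}. Then the topological entropies satisfy h(X_S) = sup_{n} h(X_{S_n}). -/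
open Filter

/-- The `S`-gap subshift: sequences over `{0,1}` in which the number of `0`'s
between consecutive `1`'s always lies in `S`. -/
def gapShift (S : Set ℕ) : Set (ℕ → Fin 2) :=
  {x | ∀ i j : ℕ, i < j → x i = 1 → x j = 1 →
    (∀ k, i < k → k < j → x k = 0) → (j - i - 1) ∈ S}

/-- The set of words of length `N` in the language of a subshift `X ⊆ {0,1}^ℕ`. -/
def langN (X : Set (ℕ → Fin 2)) (N : ℕ) : Set (Fin N → Fin 2) :=
  {w | ∃ x ∈ X, ∀ k : Fin N, w k = (x k : Fin 2)}

/-- Topological entropy of a subshift of `{0,1}^ℕ`, as the (limsup) exponential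
growth rate of the number of words in its language. -/
noncomputable def subshiftEntropy (X : Set (ℕ → Fin 2)) : ℝ :=
  limsup (fun N : ℕ => Real.log ((langN X N).ncard) / N) atTop

namespace GapAux

lemma fin2_eq_zero {a : Fin 2} (h : ¬ a = 1) : a = 0 := by fin_cases a <;> simp_all

lemma zero_mem_gapShift (S : Set ℕ) : (fun _ => (0 : Fin 2)) ∈ gapShift S := by
  intro i j _ hi _ _
  simp at hi

lemma gapShift_mono {S T : Set ℕ} (h : S ⊆ T) : gapShift S ⊆ gapShift T :=
  fun x hx i j hij hi hj hz => h (hx i j hij hi hj hz)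

lemma langN_mono {X Y : Set (ℕ → Fin 2)} (h : X ⊆ Y) (N : ℕ) : langN X N ⊆ langN Y N := by
  rintro w ⟨x, hx, he⟩; exact ⟨x, h hx, he⟩

lemma zero_word_mem (S : Set ℕ) (N : ℕ) : (fun _ => (0 : Fin 2)) ∈ langN (gapShift S) N :=
  ⟨fun _ => 0, zero_mem_gapShift S, fun _ => rfl⟩

lemma one_le_ncard_langN (S : Set ℕ) (N : ℕ) : 1 ≤ (langN (gapShift S) N).ncard :=
  (Set.ncard_pos (Set.toFinite _)).mpr ⟨_, zero_word_mem S N⟩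

lemma ncard_langN_le (X : Set (ℕ → Fin 2)) (N : ℕ) : (langN X N).ncard ≤ 2 ^ N := by
  calc (langN X N).ncard ≤ (Set.univ : Set (Fin N → Fin 2)).ncard :=
        Set.ncard_le_ncard (Set.subset_univ _) (Set.toFinite _)
    _ = 2 ^ N := by
        rw [Set.ncard_univ, Nat.card_fun]
        simp

noncomputable def fE (X : Set (ℕ → Fin 2)) (N : ℕ) : ℝ := Real.log ((langN X N).ncard) / N

lemma entropy_eq (X : Set (ℕ → Fin 2)) : subshiftEntropy X = limsup (fE X) atTop := rfl

lemma fE_nonneg (S : Set ℕ) (N : ℕ) : 0 ≤ fE (gapShift S) N :=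
  div_nonneg (Real.log_nonneg (by exact_mod_cast one_le_ncard_langN S N)) (Nat.cast_nonneg N)

lemma fE_le (S : Set ℕ) (N : ℕ) : fE (gapShift S) N ≤ Real.log 2 := by
  have h1 : (1 : ℝ) ≤ ((langN (gapShift S) N).ncard : ℝ) := by
    exact_mod_cast one_le_ncard_langN S N
  have h2 : ((langN (gapShift S) N).ncard : ℝ) ≤ 2 ^ N := by
    exact_mod_cast ncard_langN_le (gapShift S) N
  have hlog : Real.log ((langN (gapShift S) N).ncard) ≤ N * Real.log 2 := by
    calc Real.log ((langN (gapShift S) N).ncard) ≤ Real.log ((2:ℝ) ^ N) :=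
          Real.log_le_log (by linarith) h2
      _ = N * Real.log 2 := Real.log_pow 2 N
  rcases Nat.eq_zero_or_pos N with h | h
  · subst h; simp [fE]; exact Real.log_nonneg (by norm_num)
  · have hN : (0:ℝ) < N := by exact_mod_cast h
    rw [fE, div_le_iff₀ hN]
    linarith

lemma isBounded_fE (S : Set ℕ) : IsBoundedUnder (· ≤ ·) atTop (fE (gapShift S)) :=
  isBoundedUnder_of ⟨Real.log 2, fE_le S⟩

lemma isCobounded_fE (S : Set ℕ) : IsCoboundedUnder (· ≤ ·) atTop (fE (gapShift S)) :=
  isCoboundedUnder_le_of_le atTop (fE_nonneg S)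

lemma entropy_nonneg (S : Set ℕ) : 0 ≤ subshiftEntropy (gapShift S) :=
  le_limsup_of_frequently_le ((Eventually.of_forall (fE_nonneg S)).frequently) (isBounded_fE S)

lemma entropy_le_log2 (S : Set ℕ) : subshiftEntropy (gapShift S) ≤ Real.log 2 :=
  limsup_le_of_le (isCobounded_fE S) (Eventually.of_forall (fE_le S))

lemma entropy_mono {S T : Set ℕ} (h : S ⊆ T) :
    subshiftEntropy (gapShift S) ≤ subshiftEntropy (gapShift T) := by
  apply limsup_le_limsup (Eventually.of_forall ?_) (isCobounded_fE S) (isBounded_fE T)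
  intro N
  have h1 : (0:ℝ) < ((langN (gapShift S) N).ncard : ℝ) := by
    exact_mod_cast one_le_ncard_langN S N
  have h2 : ((langN (gapShift S) N).ncard : ℝ) ≤ ((langN (gapShift T) N).ncard : ℝ) := by
    exact_mod_cast Set.ncard_le_ncard (langN_mono (gapShift_mono h) N) (Set.toFinite _)
  rcases Nat.eq_zero_or_pos N with hN | hN
  · simp [fE, hN]
  · exact div_le_div_of_nonneg_right (Real.log_le_log h1 h2) (by positivity)

/-! ### Complete words -/

def Comp (S : Set ℕ) (M : ℕ) : Set (ℕ → Fin 2) :=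
  {x | x ∈ gapShift S ∧ x 0 = 1 ∧ x (M - 1) = 1 ∧ ∀ k, M ≤ k → x k = 0}

lemma comp_finite (S : Set ℕ) (M : ℕ) : (Comp S M).Finite := by
  have hinj : Set.InjOn (fun x : ℕ → Fin 2 => (fun k : Fin M => x k)) (Comp S M) := by
    intro x hx y hy hxy
    funext k
    rcases lt_or_ge k M with hk | hk
    · exact congrFun hxy ⟨k, hk⟩
    · rw [hx.2.2.2 k hk, hy.2.2.2 k hk]
  exact Set.Finite.of_finite_image (Set.toFinite _) hinj

lemma comp_zero (S : Set ℕ) : Comp S 0 = ∅ := by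
  apply Set.eq_empty_iff_forall_notMem.mpr
  rintro x ⟨-, h0, -, hall⟩
  rw [hall 0 le_rfl] at h0
  exact absurd h0 (by decide)

lemma comp_subset_comp {S : Set ℕ} {s : ℕ → ℕ} (hmono : StrictMono s) (hrange : Set.range s = S)
    (n M : ℕ) (hM : M ≤ n + 2) : Comp S M ⊆ Comp {m : ℕ | ∃ k ≤ n, s k = m} M := by
  rintro x ⟨hg, h0, hM1, hz⟩
  refine ⟨?_, h0, hM1, hz⟩
  intro i j hij hi hj hb
  have hgap : j - i - 1 ∈ S := hg i j hij hi hj hb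
  have hjM : j < M := by
    by_contra h
    rw [hz j (le_of_not_gt h)] at hj
    exact absurd hj (by decide)
  rw [← hrange] at hgap
  obtain ⟨k, hk⟩ := hgap
  have hks : k ≤ s k := hmono.le_apply
  exact ⟨k, by omega, hk⟩

/-! ### Cutting a word to a complete word -/

lemma fin2_one_of_ne_zero {a : Fin 2} (h : ¬ a = 0) : a = 1 := by fin_cases a <;> simp_all

def wones {N : ℕ} (w : Fin N → Fin 2) : Finset (Fin N) :=
  Finset.univ.filter (fun k => w k = 1)

lemma mem_wones {N : ℕ} {w : Fin N → Fin 2} {k : Fin N} : k ∈ wones w ↔ w k = 1 := by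
  simp [wones]

def wfirst {N : ℕ} (w : Fin N → Fin 2) (h : (wones w).Nonempty) : Fin N := (wones w).min' h

def wlast {N : ℕ} (w : Fin N → Fin 2) (h : (wones w).Nonempty) : Fin N := (wones w).max' h

lemma wfirst_one {N : ℕ} (w : Fin N → Fin 2) (h : (wones w).Nonempty) : w (wfirst w h) = 1 :=
  mem_wones.mp ((wones w).min'_mem h)

lemma wlast_one {N : ℕ} (w : Fin N → Fin 2) (h : (wones w).Nonempty) : w (wlast w h) = 1 :=
  mem_wones.mp ((wones w).max'_mem h)

lemma wfirst_le {N : ℕ} {w : Fin N → Fin 2} (h : (wones w).Nonempty) {k : Fin N}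
    (hk : w k = 1) : (wfirst w h : ℕ) ≤ k :=
  (wones w).min'_le k (mem_wones.mpr hk)

lemma le_wlast {N : ℕ} {w : Fin N → Fin 2} (h : (wones w).Nonempty) {k : Fin N}
    (hk : w k = 1) : (k : ℕ) ≤ wlast w h :=
  (wones w).le_max' k (mem_wones.mpr hk)

lemma wfirst_le_wlast {N : ℕ} (w : Fin N → Fin 2) (h : (wones w).Nonempty) :
    (wfirst w h : ℕ) ≤ wlast w h :=
  wfirst_le h (wlast_one w h)

def wcut {N : ℕ} (w : Fin N → Fin 2) (h : (wones w).Nonempty) : ℕ → Fin 2 :=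
  fun p => if hp : (wfirst w h : ℕ) + p < N then w ⟨(wfirst w h : ℕ) + p, hp⟩ else 0

lemma wcut_eval {N : ℕ} (w : Fin N → Fin 2) (h : (wones w).Nonempty) {k : Fin N}
    (hk : (wfirst w h : ℕ) ≤ k) : wcut w h ((k : ℕ) - wfirst w h) = w k := by
  have h1 : (wfirst w h : ℕ) + ((k : ℕ) - wfirst w h) = k := by omega
  have h2 : (wfirst w h : ℕ) + ((k : ℕ) - wfirst w h) < N := by
    rw [h1]; exact k.isLt
  rw [wcut]
  rw [dif_pos h2]
  congr 1
  exact Fin.ext h1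

lemma wcut_one {N : ℕ} {w : Fin N → Fin 2} {h : (wones w).Nonempty} {p : ℕ}
    (hp : wcut w h p = 1) :
    ∃ hc : (wfirst w h : ℕ) + p < N, w ⟨(wfirst w h : ℕ) + p, hc⟩ = 1 := by
  rw [wcut] at hp
  by_cases hc : (wfirst w h : ℕ) + p < N
  · rw [dif_pos hc] at hp; exact ⟨hc, hp⟩
  · rw [dif_neg hc] at hp; exact absurd hp (by decide)

lemma wcut_zero_of_ge {N : ℕ} (w : Fin N → Fin 2) (h : (wones w).Nonempty) {p : ℕ}
    (hp : (wlast w h : ℕ) - wfirst w h + 1 ≤ p) : wcut w h p = 0 := by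
  by_contra hne
  obtain ⟨hc, hone⟩ := wcut_one (fin2_one_of_ne_zero hne)
  have h2 : (wfirst w h : ℕ) + p ≤ (wlast w h : ℕ) := le_wlast h hone
  omega

lemma recon {N : ℕ} (w : Fin N → Fin 2) (h : (wones w).Nonempty) (k : Fin N) :
    w k = if (wfirst w h : ℕ) ≤ (k : ℕ) then wcut w h ((k : ℕ) - wfirst w h) else 0 := by
  split
  · rename_i hk
    exact (wcut_eval w h hk).symm
  · rename_i hk
    by_contra hne
    exact hk (wfirst_le h (fin2_one_of_ne_zero hne))

lemma wcut_mem {S : Set ℕ} {N : ℕ} {w : Fin N → Fin 2} (hw : w ∈ langN (gapShift S) N)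
    (h : (wones w).Nonempty) :
    wcut w h ∈ Comp S ((wlast w h : ℕ) - wfirst w h + 1) := by
  obtain ⟨y, hy, hwy⟩ := hw
  refine ⟨?_, ?_, ?_, fun p hp => wcut_zero_of_ge w h hp⟩
  · intro p q hpq hp hq hb
    obtain ⟨hcp, hwp⟩ := wcut_one hp
    obtain ⟨hcq, hwq⟩ := wcut_one hq
    set i := (wfirst w h : ℕ) with hidef
    have hyp : y (i + p) = 1 := by
      have := hwy ⟨i + p, hcp⟩
      rw [hwp] at this
      exact this.symm
    have hyq : y (i + q) = 1 := by
      have := hwy ⟨i + q, hcq⟩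
      rw [hwq] at this
      exact this.symm
    have hgap : (i + q) - (i + p) - 1 ∈ S := by
      apply hy (i + p) (i + q) (by omega) hyp hyq
      intro k hk1 hk2
      have hkN : k < N := by omega
      have hk3 : i ≤ (⟨k, hkN⟩ : Fin N) := by simp; omega
      have hkw : wcut w h (k - i) = w ⟨k, hkN⟩ := wcut_eval w h hk3
      have hz : wcut w h (k - i) = 0 := hb (k - i) (by omega) (by omega)
      have := hwy ⟨k, hkN⟩
      rw [← hkw, hz] at this
      exact this.symm
    have heq : (i + q) - (i + p) - 1 = q - p - 1 := by omega
    rwa [heq] at hgap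
  · have := wcut_eval w h (le_refl (wfirst w h : ℕ))
    simp only [Nat.sub_self] at this
    rw [this]
    exact wfirst_one w h
  · have h1 := wcut_eval w h (wfirst_le_wlast w h)
    have h2 : (wlast w h : ℕ) - wfirst w h + 1 - 1 = (wlast w h : ℕ) - wfirst w h := by omega
    rw [h2, h1]
    exact wlast_one w h

/-! ### Core A: decomposition upper bound -/

lemma langN_ncard_le (S : Set ℕ) (N : ℕ) (C : ℕ)
    (hC : ∀ M, M ≤ N → (Comp S M).ncard ≤ C) :
    (langN (gapShift S) N).ncard ≤ 1 + N * N * (C + 1) := by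
  classical
  have hemb : ∀ M : ℕ, M ≤ N → ∃ f : (ℕ → Fin 2) → Fin (C + 1), Set.InjOn f (Comp S M) := by
    intro M hM
    haveI := (comp_finite S M).fintype
    have hcard : Fintype.card (Comp S M) ≤ Fintype.card (Fin (C + 1)) := by
      rw [Fintype.card_fin]
      have h1 := hC M hM
      rw [← Nat.card_coe_set_eq, Nat.card_eq_fintype_card] at h1
      omega
    obtain ⟨e⟩ := Function.Embedding.nonempty_of_card_le hcard
    refine ⟨fun x => if hx : x ∈ Comp S M then e ⟨x, hx⟩ else ⟨0, Nat.succ_pos C⟩, ?_⟩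
    intro x1 h1 x2 h2 h12
    dsimp only at h12
    rw [dif_pos h1, dif_pos h2] at h12
    exact Subtype.mk_eq_mk.mp (e.injective h12)
  have hembij : ∀ i j : Fin N, ∃ f : (ℕ → Fin 2) → Fin (C + 1),
      Set.InjOn f (Comp S ((j : ℕ) - i + 1)) :=
    fun i j => hemb _ (by have := j.isLt; omega)
  choose E hE using hembij
  set φ : (Fin N → Fin 2) → Option (Fin N × Fin N × Fin (C + 1)) := fun w =>
    if h : (wones w).Nonempty then
      some (wfirst w h, wlast w h, E (wfirst w h) (wlast w h) (wcut w h))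
    else none
    with hφ
  have hinj : Set.InjOn φ (langN (gapShift S) N) := by
    intro w1 hw1 w2 hw2 heq
    by_cases h1 : (wones w1).Nonempty <;> by_cases h2 : (wones w2).Nonempty
    · rw [hφ] at heq
      simp only [dif_pos h1, dif_pos h2, Option.some.injEq, Prod.mk.injEq] at heq
      obtain ⟨hi, hj, hx⟩ := heq
      have hx1 := wcut_mem hw1 h1
      have hx2 := wcut_mem hw2 h2
      rw [hi, hj] at hx
      have hM : ((wlast w1 h1 : ℕ) - wfirst w1 h1 + 1)
          = ((wlast w2 h2 : ℕ) - wfirst w2 h2 + 1) := by rw [hi, hj]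
      rw [hM] at hx1
      have hcut : wcut w1 h1 = wcut w2 h2 := hE _ _ hx1 hx2 hx
      funext k
      rw [recon w1 h1 k, recon w2 h2 k, hi, hcut]
    · rw [hφ] at heq
      simp only [dif_pos h1, dif_neg h2] at heq
      exact nomatch heq
    · rw [hφ] at heq
      simp only [dif_neg h1, dif_pos h2] at heq
      exact nomatch heq
    · funext k
      have e1 : w1 k = 0 := fin2_eq_zero (fun hk => h1 ⟨k, mem_wones.mpr hk⟩)
      have e2 : w2 k = 0 := fin2_eq_zero (fun hk => h2 ⟨k, mem_wones.mpr hk⟩)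
      rw [e1, e2]
  calc (langN (gapShift S) N).ncard = (φ '' langN (gapShift S) N).ncard :=
        (Set.ncard_image_of_injOn hinj).symm
    _ ≤ (Set.univ : Set (Option (Fin N × Fin N × Fin (C + 1)))).ncard :=
        Set.ncard_le_ncard (Set.subset_univ _) (Set.toFinite _)
    _ = 1 + N * N * (C + 1) := by
        rw [Set.ncard_univ, Nat.card_eq_fintype_card]
        simp [Fintype.card_option, Fintype.card_prod]
        ring

/-! ### Core B: supermultiplicative lower bound via glued blocks -/

def glue (L r : ℕ) (xs : Fin r → (ℕ → Fin 2)) : ℕ → Fin 2 :=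
  fun q => if h : q / L < r then xs ⟨q / L, h⟩ (q % L) else 0

lemma glue_eval {L r : ℕ} (hL : 0 < L) (xs : Fin r → (ℕ → Fin 2)) {t p : ℕ}
    (ht : t < r) (hp : p < L) : glue L r xs (p + L * t) = xs ⟨t, ht⟩ p := by
  have hdiv : (p + L * t) / L = t := by
    rw [Nat.add_mul_div_left _ _ hL, Nat.div_eq_of_lt hp, Nat.zero_add]
  have hmod : (p + L * t) % L = p := by
    rw [Nat.add_mul_mod_self_left, Nat.mod_eq_of_lt hp]
  have hq : (p + L * t) / L < r := by rw [hdiv]; exact ht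
  rw [glue, dif_pos hq]
  have hfin : (⟨(p + L * t) / L, hq⟩ : Fin r) = ⟨t, ht⟩ := Fin.ext hdiv
  rw [hfin, hmod]

lemma glue_one {L r : ℕ} {xs : Fin r → (ℕ → Fin 2)} {q : ℕ} (h1 : glue L r xs q = 1) :
    ∃ h : q / L < r, xs ⟨q / L, h⟩ (q % L) = 1 := by
  rw [glue] at h1
  by_cases h : q / L < r
  · rw [dif_pos h] at h1; exact ⟨h, h1⟩
  · rw [dif_neg h] at h1; exact absurd h1 (by decide)

lemma glue_mem {T : Set ℕ} {M g : ℕ} (hg : g ∈ T) (hM : 1 ≤ M) (r : ℕ)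
    (xs : Fin r → (ℕ → Fin 2)) (hxs : ∀ t, xs t ∈ Comp T M) :
    glue (M + g) r xs ∈ gapShift T := by
  set L := M + g with hLdef
  have hL : 0 < L := by omega
  intro i j hij hyi hyj hz
  obtain ⟨hti, hxi⟩ := glue_one hyi
  obtain ⟨htj, hxj⟩ := glue_one hyj
  set t := i / L with htdef
  set p := i % L with hpdef
  set t' := j / L with ht'def
  set q := j % L with hqdef
  have hiLp : i = p + L * t := by rw [hpdef, htdef, Nat.mod_add_div]
  have hjLq : j = q + L * t' := by rw [hqdef, ht'def, Nat.mod_add_div]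
  have hpM : p < M := by
    by_contra hc
    rw [(hxs ⟨t, hti⟩).2.2.2 p (le_of_not_gt hc)] at hxi
    exact absurd hxi (by decide)
  have hqM : q < M := by
    by_contra hc
    rw [(hxs ⟨t', htj⟩).2.2.2 q (le_of_not_gt hc)] at hxj
    exact absurd hxj (by decide)
  rcases eq_or_lt_of_le (show t ≤ t' from Nat.div_le_div_right (le_of_lt hij)) with hte | htlt
  · -- same block
    have hLte : L * t = L * t' := by rw [hte]
    have hpq : p < q := by omega
    have hfin : (⟨t, hti⟩ : Fin r) = ⟨t', htj⟩ := Fin.ext hte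
    rw [hfin] at hxi
    have hgap := (hxs ⟨t', htj⟩).1 p q hpq hxi hxj ?_
    · have heq : j - i - 1 = q - p - 1 := by omega
      rwa [heq]
    · intro k hk1 hk2
      have hkL : k < L := by omega
      have hzk := hz (k + L * t') (by omega) (by omega)
      rwa [glue_eval hL xs htj hkL] at hzk
  · -- adjacent blocks
    have hLt1 : L * (t + 1) ≤ L * t' := Nat.mul_le_mul_left L htlt
    have he1 : L * (t + 1) = L * t + L := by ring
    have hpe : p = M - 1 := by
      by_contra hc
      have h1M : M - 1 < L := by omega
      have hu1 : glue L r xs ((M - 1) + L * t) = 1 := by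
        rw [glue_eval hL xs hti h1M]
        exact (hxs ⟨t, hti⟩).2.2.1
      have hzu := hz ((M - 1) + L * t) (by omega) (by omega)
      rw [hzu] at hu1
      exact absurd hu1 (by decide)
    have ht'e : t' = t + 1 := by
      by_contra hc
      have htlt2 : t + 2 ≤ t' := by omega
      have hLt2 : L * (t + 2) ≤ L * t' := Nat.mul_le_mul_left L htlt2
      have he2 : L * (t + 2) = L * t + L + L := by ring
      have ht1r : t + 1 < r := by
        have : t + 1 < t' := by omega
        omega
      have hu1 : glue L r xs (0 + L * (t + 1)) = 1 := by
        rw [glue_eval hL xs ht1r (by omega)]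
        exact (hxs ⟨t + 1, ht1r⟩).2.1
      have hzu := hz (0 + L * (t + 1)) (by omega) (by omega)
      rw [hzu] at hu1
      exact absurd hu1 (by decide)
    have hqe : q = 0 := by
      by_contra hc
      have hu1 : glue L r xs (0 + L * t') = 1 := by
        rw [glue_eval hL xs htj (by omega)]
        exact (hxs ⟨t', htj⟩).2.1
      have hzu := hz (0 + L * t') (by omega) (by omega)
      rw [hzu] at hu1
      exact absurd hu1 (by decide)
    have he3 : L * t' = L * t + L := by rw [ht'e]; ring
    have heq : j - i - 1 = g := by omega
    rwa [heq]

lemma pow_le_ncard (T : Set ℕ) {M g : ℕ} (hg : g ∈ T) (hM : 1 ≤ M) (r : ℕ) :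
    (Comp T M).ncard ^ r ≤ (langN (gapShift T) (r * (M + g))).ncard := by
  classical
  set L := M + g with hLdef
  have hL : 0 < L := by omega
  haveI : Finite (langN (gapShift T) (r * L)) := (Set.toFinite _).to_subtype
  haveI : Finite (Comp T M) := (comp_finite T M).to_subtype
  set Ψ : (Fin r → (Comp T M)) → (langN (gapShift T) (r * L)) := fun xs =>
    ⟨fun k => glue L r (fun u => (xs u : ℕ → Fin 2)) k,
     ⟨glue L r (fun u => (xs u : ℕ → Fin 2)),
      glue_mem hg hM r _ (fun u => (xs u).2), fun _ => rfl⟩⟩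
    with hΨdef
  have hΨ : Function.Injective Ψ := by
    intro a b hab
    have hab' : ∀ k : Fin (r * L),
        glue L r (fun u => (a u : ℕ → Fin 2)) k = glue L r (fun u => (b u : ℕ → Fin 2)) k := by
      intro k
      have := congrArg Subtype.val hab
      rw [hΨdef] at this
      exact congrFun this k
    funext t
    apply Subtype.ext
    funext p
    rcases lt_or_ge p M with hp | hp
    · have hpL : p < L := by omega
      have hmul : L * (t + 1) ≤ L * r := Nat.mul_le_mul_left L t.isLt
      have hmul2 : L * (t + 1) = L * t + L := by ring
      have hkr : p + L * (t : ℕ) < r * L := by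
        have : r * L = L * r := by ring
        omega
      have hk := hab' ⟨p + L * (t : ℕ), hkr⟩
      simp only [] at hk
      rw [glue_eval hL _ t.isLt hpL, glue_eval hL _ t.isLt hpL] at hk
      simpa using hk
    · rw [(a t).2.2.2.2 p hp, (b t).2.2.2.2 p hp]
  have hcard := Nat.card_le_card_of_injective Ψ hΨ
  rwa [Nat.card_fun, Nat.card_coe_set_eq, Nat.card_coe_set_eq,
    Nat.card_eq_fintype_card (α := Fin r), Fintype.card_fin] at hcard

/-! ### From block counting to entropy bounds -/

lemma log_comp_le (T : Set ℕ) {M g : ℕ} (hg : g ∈ T) (hM : 1 ≤ M) :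
    Real.log ((Comp T M).ncard) ≤ ((M : ℝ) + g) * subshiftEntropy (gapShift T) := by
  rcases Nat.eq_zero_or_pos (Comp T M).ncard with h0 | h0
  · rw [h0]
    simp only [Nat.cast_zero, Real.log_zero]
    exact mul_nonneg (by positivity) (entropy_nonneg T)
  · have hc1 : (1 : ℝ) ≤ ((Comp T M).ncard : ℝ) := by exact_mod_cast h0
    have hMg : (0 : ℝ) < (M : ℝ) + g := by
      have : (1 : ℝ) ≤ (M : ℝ) := by exact_mod_cast hM
      positivity
    have key : ∀ r : ℕ, 1 ≤ r →
        Real.log ((Comp T M).ncard) / ((M : ℝ) + g) ≤ fE (gapShift T) (r * (M + g)) := by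
      intro r hr
      have hle := pow_le_ncard T hg hM r
      have hr0 : (0 : ℝ) < (r : ℝ) := by exact_mod_cast hr
      have hlogpow : (r : ℝ) * Real.log ((Comp T M).ncard)
          ≤ Real.log ((langN (gapShift T) (r * (M + g))).ncard) := by
        rw [← Real.log_pow]
        apply Real.log_le_log (by positivity)
        exact_mod_cast hle
      have e1 : Real.log ((Comp T M).ncard) / ((M : ℝ) + g)
          = ((r : ℝ) * Real.log ((Comp T M).ncard)) / ((r : ℝ) * ((M : ℝ) + g)) := by
        rw [mul_div_mul_left _ _ (ne_of_gt hr0)]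
      rw [fE, e1]
      have e2 : ((r * (M + g) : ℕ) : ℝ) = (r : ℝ) * ((M : ℝ) + g) := by push_cast; ring
      rw [e2]
      apply div_le_div_of_nonneg_right hlogpow
      positivity
    have hfreq : ∃ᶠ K in atTop, Real.log ((Comp T M).ncard) / ((M : ℝ) + g)
        ≤ fE (gapShift T) K := by
      rw [frequently_atTop]
      intro b
      refine ⟨(b + 1) * (M + g), ?_, key (b + 1) (by omega)⟩
      have h1 : b + 1 ≤ (b + 1) * (M + g) := Nat.le_mul_of_pos_right _ (by omega)
      omega
    have hlim := le_limsup_of_frequently_le hfreq (isBounded_fE T)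
    rw [← entropy_eq] at hlim
    calc Real.log ((Comp T M).ncard)
        = Real.log ((Comp T M).ncard) / ((M : ℝ) + g) * ((M : ℝ) + g) := by
          field_simp
      _ ≤ subshiftEntropy (gapShift T) * ((M : ℝ) + g) :=
          mul_le_mul_of_nonneg_right hlim (le_of_lt hMg)
      _ = ((M : ℝ) + g) * subshiftEntropy (gapShift T) := by ring

lemma main_est (S : Set ℕ) (s : ℕ → ℕ) (hmono : StrictMono s) (hrange : Set.range s = S)
    (H : ℝ) (hH0 : 0 ≤ H)
    (hHn : ∀ n : ℕ, subshiftEntropy (gapShift {m : ℕ | ∃ k ≤ n, s k = m}) ≤ H)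
    (N : ℕ) (hN : 1 ≤ N) :
    fE (gapShift S) N
      ≤ (Real.log 2 + Real.log 2 + 2 * Real.log N + ((N : ℝ) + s 0) * H) / N := by
  classical
  set C := (Finset.range (N + 1)).sup (fun M => (Comp S M).ncard) with hCdef
  have hCle : ∀ M, M ≤ N → (Comp S M).ncard ≤ C := by
    intro M hM
    exact Finset.le_sup (f := fun M => (Comp S M).ncard) (Finset.mem_range.mpr (by omega))
  have hcard := langN_ncard_le S N C hCle
  have hNpos : (0 : ℝ) < (N : ℝ) := by exact_mod_cast hN
  -- bound on log (C + 1)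
  have hlogC : Real.log ((C : ℝ) + 1) ≤ Real.log 2 + ((N : ℝ) + s 0) * H := by
    obtain ⟨M, hMmem, hMe⟩ := Finset.exists_mem_eq_sup (Finset.range (N + 1))
      ⟨0, Finset.mem_range.mpr (by omega)⟩ (fun M => (Comp S M).ncard)
    have hMN : M ≤ N := by
      have := Finset.mem_range.mp hMmem
      omega
    rcases Nat.eq_zero_or_pos C with hC0 | hC0
    · rw [hC0]
      norm_num
      have h1 : (0:ℝ) ≤ ((N : ℝ) + s 0) * H := by positivity
      have h2 : (0:ℝ) ≤ Real.log 2 := Real.log_nonneg (by norm_num)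
      linarith
    · have hM1 : 1 ≤ M := by
        rcases Nat.eq_zero_or_pos M with h | h
        · rw [h] at hMe
          rw [comp_zero, Set.ncard_empty] at hMe
          omega
        · exact h
      have hsub : Comp S M ⊆ Comp {m : ℕ | ∃ k ≤ N, s k = m} M :=
        comp_subset_comp hmono hrange N M (by omega)
      have hCc : C ≤ (Comp {m : ℕ | ∃ k ≤ N, s k = m} M).ncard := by
        rw [hCdef, hMe]
        exact Set.ncard_le_ncard hsub (comp_finite _ _)
      have hc1 : 1 ≤ (Comp {m : ℕ | ∃ k ≤ N, s k = m} M).ncard := le_trans hC0 hCc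
      have hg : s 0 ∈ {m : ℕ | ∃ k ≤ N, s k = m} := ⟨0, Nat.zero_le N, rfl⟩
      have hlogc := log_comp_le _ hg hM1
      have hent := hHn N
      have h2c : ((C : ℝ) + 1) ≤ 2 * ((Comp {m : ℕ | ∃ k ≤ N, s k = m} M).ncard : ℝ) := by
        exact_mod_cast (by omega : C + 1 ≤ 2 * (Comp {m : ℕ | ∃ k ≤ N, s k = m} M).ncard)
      have hcR : (1:ℝ) ≤ ((Comp {m : ℕ | ∃ k ≤ N, s k = m} M).ncard : ℝ) := by
        exact_mod_cast hc1
      calc Real.log ((C : ℝ) + 1) ≤ Real.log (2 * ((Comp {m : ℕ | ∃ k ≤ N, s k = m} M).ncard : ℝ)) :=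
            Real.log_le_log (by positivity) h2c
        _ = Real.log 2 + Real.log ((Comp {m : ℕ | ∃ k ≤ N, s k = m} M).ncard : ℝ) :=
            Real.log_mul (by norm_num) (by linarith)
        _ ≤ Real.log 2 + ((M : ℝ) + s 0) * H := by
            have hble : ((M : ℝ) + s 0) * subshiftEntropy (gapShift {m : ℕ | ∃ k ≤ N, s k = m})
                ≤ ((M : ℝ) + s 0) * H := by
              apply mul_le_mul_of_nonneg_left hent
              positivity
            linarith
        _ ≤ Real.log 2 + ((N : ℝ) + s 0) * H := by
            have hMNr : ((M : ℝ) + s 0) ≤ ((N : ℝ) + s 0) := by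
              have : (M : ℝ) ≤ (N : ℝ) := by exact_mod_cast hMN
              linarith
            have := mul_le_mul_of_nonneg_right hMNr hH0
            linarith
  -- combine
  have hup : ((langN (gapShift S) N).ncard : ℝ) ≤ 2 * ((N : ℝ) * N) * ((C : ℝ) + 1) := by
    have h1 : 1 ≤ N * N * (C + 1) := Nat.one_le_iff_ne_zero.mpr (by positivity)
    have h2 : (langN (gapShift S) N).ncard ≤ 2 * (N * N) * (C + 1) := by
      have := hcard
      have e : 2 * (N * N) * (C + 1) = N * N * (C + 1) + N * N * (C + 1) := by ring
      omega
    exact_mod_cast h2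
  have hpos : (0:ℝ) < ((langN (gapShift S) N).ncard : ℝ) := by
    exact_mod_cast one_le_ncard_langN S N
  have hlogup : Real.log ((langN (gapShift S) N).ncard)
      ≤ Real.log 2 + Real.log 2 + 2 * Real.log N + ((N : ℝ) + s 0) * H := by
    calc Real.log ((langN (gapShift S) N).ncard)
        ≤ Real.log (2 * ((N : ℝ) * N) * ((C : ℝ) + 1)) := Real.log_le_log hpos hup
      _ = Real.log 2 + (Real.log N + Real.log N) + Real.log ((C : ℝ) + 1) := by
          have hNne : (N : ℝ) ≠ 0 := by positivity
          have hCne : ((C : ℝ) + 1) ≠ 0 := by positivity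
          have e1 : Real.log (2 * ((N : ℝ) * N) * ((C : ℝ) + 1))
              = Real.log (2 * ((N : ℝ) * N)) + Real.log ((C : ℝ) + 1) :=
            Real.log_mul (by positivity) hCne
          have e2 : Real.log (2 * ((N : ℝ) * N)) = Real.log 2 + Real.log ((N : ℝ) * N) :=
            Real.log_mul (by norm_num) (by positivity)
          have e3 : Real.log ((N : ℝ) * N) = Real.log N + Real.log N := Real.log_mul hNne hNne
          rw [e1, e2, e3]
      _ ≤ Real.log 2 + (Real.log N + Real.log N) + (Real.log 2 + ((N : ℝ) + s 0) * H) := by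
          linarith
      _ = Real.log 2 + Real.log 2 + 2 * Real.log N + ((N : ℝ) + s 0) * H := by ring
  rw [fE]
  apply div_le_div_of_nonneg_right hlogup
  positivity

end GapAux

open GapAux

/-- For an infinite set `S` enumerated in increasing order by `s`, the entropy of
the `S`-gap subshift is the supremum of the entropies of the `S_n`-gap subshifts,
where `S_n` consists of the `n` smallest elements of `S`. -/
theorem gap_shift_entropy_sup (S : Set ℕ) (hS : S.Infinite)
    (s : ℕ → ℕ) (hmono : StrictMono s) (hrange : Set.range s = S) :
    subshiftEntropy (gapShift S)
      = ⨆ n : ℕ, subshiftEntropy (gapShift {m : ℕ | ∃ k ≤ n, s k = m}) := by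
  classical
  have hsub : ∀ n : ℕ, {m : ℕ | ∃ k ≤ n, s k = m} ⊆ S := by
    rintro n m ⟨k, hk, rfl⟩
    rw [← hrange]
    exact ⟨k, rfl⟩
  have hbdd : BddAbove (Set.range fun n : ℕ =>
      subshiftEntropy (gapShift {m : ℕ | ∃ k ≤ n, s k = m})) := by
    refine ⟨Real.log 2, ?_⟩
    rintro x ⟨n, rfl⟩
    exact entropy_le_log2 _
  set H : ℝ := ⨆ n : ℕ, subshiftEntropy (gapShift {m : ℕ | ∃ k ≤ n, s k = m}) with hHdef
  have hHn : ∀ n : ℕ, subshiftEntropy (gapShift {m : ℕ | ∃ k ≤ n, s k = m}) ≤ H :=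
    fun n => le_ciSup hbdd n
  have hH0 : 0 ≤ H := le_trans (entropy_nonneg _) (hHn 0)
  apply le_antisymm
  · -- the hard direction
    set G : ℕ → ℝ := fun N =>
      (Real.log 2 + Real.log 2 + 2 * Real.log N + ((N : ℝ) + s 0) * H) / N with hGdef
    have hev : ∀ᶠ N in atTop, fE (gapShift S) N ≤ G N := by
      filter_upwards [eventually_ge_atTop 1] with N hN
      exact main_est S s hmono hrange H hH0 hHn N hN
    have t1 := tendsto_const_div_atTop_nhds_zero_nat (Real.log 2)
    have t3 : Tendsto (fun N : ℕ => Real.log N / N) atTop (nhds 0) := by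
      have h := Real.isLittleO_log_id_atTop.tendsto_div_nhds_zero
      have := h.comp tendsto_natCast_atTop_atTop (α := ℕ)
      exact this.congr (fun n => by simp [Function.comp])
    have t4 := tendsto_const_div_atTop_nhds_zero_nat (s 0 : ℝ)
    have hsum : Tendsto (fun N : ℕ => Real.log 2 / N + Real.log 2 / N
        + 2 * (Real.log N / N) + (1 + (s 0 : ℝ) / N) * H) atTop
        (nhds (0 + 0 + 2 * 0 + (1 + 0) * H)) :=
      (((t1.add t1).add (t3.const_mul 2)).add ((tendsto_const_nhds.add t4).mul_const H))
    rw [show (0 : ℝ) + 0 + 2 * 0 + (1 + 0) * H = H by ring] at hsum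
    have htend : Tendsto G atTop (nhds H) := by
      apply hsum.congr'
      filter_upwards [eventually_ge_atTop 1] with N hN
      have hN0 : (N : ℝ) ≠ 0 := Nat.cast_ne_zero.mpr (by omega)
      rw [hGdef]
      field_simp
    calc subshiftEntropy (gapShift S) = limsup (fE (gapShift S)) atTop := rfl
      _ ≤ limsup G atTop := limsup_le_limsup hev (isCobounded_fE S) htend.isBoundedUnder_le
      _ = H := htend.limsup_eq
  · exact ciSup_le fun n => entropy_mono (hsub n)
end
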